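/- arXiv:2604.24165 — 5 statements merged into one kernel-verified Lean document; each statement's English description precedes it below -/
import Mathlib

section
/- Let z_1, …, z_n ∈ ℂ satisfy Σ_{i=1}^n z_i = 0. Then (Σ_{i=1}^n |z_i|)² ≥ 2 Σ_{i=1}^n |z_i|². Moreover, equality holds if and only if either z_1 = ⋯ = z_n = 0, or there exist distinct indices p ≠ q and a nonzero α ∈ ℂ such that z_p = α, z_q = −α, and z_i = 0 for all i ∉ {p, q}. -/
open Finset

lemma my_split {M : Type*} [AddCommMonoid M] {n : ℕ} {p q : Fin n} (hqp : q ≠ p)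
    (f : Fin n → M) :
    ∑ i, f i = f p + f q + ∑ i ∈ (Finset.univ.erase p).erase q, f i := by
  rw [← Finset.add_sum_erase _ f (Finset.mem_univ p),
      ← Finset.add_sum_erase _ f (Finset.mem_erase.mpr ⟨hqp, Finset.mem_univ q⟩), add_assoc]

/-- If `z_1, …, z_n ∈ ℂ` satisfy `Σ z_i = 0`, then `(Σ |z_i|)² ≥ 2 Σ |z_i|²`, with equality
iff all `z_i = 0`, or there are distinct `p ≠ q` and `α ≠ 0` with `z_p = α`, `z_q = −α`,
and `z_i = 0` for all `i ∉ {p, q}`. -/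
theorem sum_abs_sq_ge_two_sum_sq_abs {n : ℕ} (z : Fin n → ℂ)
    (h : ∑ i, z i = 0) :
    (∑ i, ‖z i‖) ^ 2 ≥ 2 * ∑ i, ‖z i‖ ^ 2 ∧
    ((∑ i, ‖z i‖) ^ 2 = 2 * ∑ i, ‖z i‖ ^ 2 ↔
      (∀ i, z i = 0) ∨
      ∃ p q : Fin n, p ≠ q ∧ ∃ α : ℂ, α ≠ 0 ∧ z p = α ∧ z q = -α ∧
        ∀ i, i ≠ p → i ≠ q → z i = 0) := by
  set A : Fin n → ℝ := fun i => ‖z i‖ with hA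
  set S : ℝ := ∑ i, A i with hS
  have hAnn : ∀ i, 0 ≤ A i := fun i => norm_nonneg _
  have hkey : ∀ i, 2 * A i ≤ S := by
    intro i
    have h1 : z i + ∑ j ∈ univ.erase i, z j = ∑ j, z j :=
      Finset.add_sum_erase _ _ (mem_univ i)
    rw [h] at h1
    have h2 : ∑ j ∈ univ.erase i, z j = - z i := by linear_combination h1
    have h3 : A i + ∑ j ∈ univ.erase i, A j = S :=
      Finset.add_sum_erase _ _ (mem_univ i)
    have h4 : A i ≤ ∑ j ∈ univ.erase i, A j := by
      calc A i = ‖∑ j ∈ univ.erase i, z j‖ := by rw [h2]; simp [hA]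
        _ ≤ ∑ j ∈ univ.erase i, A j := norm_sum_le _ _
    linarith
  have hexp : ∑ i, A i * (S - 2 * A i) = S ^ 2 - 2 * ∑ i, A i ^ 2 := by
    have h1 : ∑ i, A i * (S - 2 * A i) = (∑ i, A i * S) - ∑ i, 2 * A i ^ 2 := by
      rw [← Finset.sum_sub_distrib]
      exact Finset.sum_congr rfl fun i _ => by ring
    rw [h1, ← Finset.sum_mul, ← Finset.mul_sum, ← hS]
    ring
  have hterm : ∀ i, 0 ≤ A i * (S - 2 * A i) := fun i =>
    mul_nonneg (hAnn i) (by linarith [hkey i])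
  have hineq : 2 * ∑ i, A i ^ 2 ≤ S ^ 2 := by
    have h0 : 0 ≤ ∑ i, A i * (S - 2 * A i) := Finset.sum_nonneg fun i _ => hterm i
    linarith [hexp]
  refine ⟨hineq, ?_, ?_⟩
  · -- equality → characterization
    intro heq
    have heq' : S ^ 2 = 2 * ∑ i, A i ^ 2 := heq
    have hsum0 : ∑ i, A i * (S - 2 * A i) = 0 := by linarith [hexp]
    have hall : ∀ i ∈ Finset.univ, A i * (S - 2 * A i) = 0 :=
      (Finset.sum_eq_zero_iff_of_nonneg fun i _ => hterm i).mp hsum0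
    by_cases hz0 : ∀ i, z i = 0
    · exact Or.inl hz0
    · push_neg at hz0
      obtain ⟨p, hp⟩ := hz0
      have hAp : 0 < A p := by
        simpa [hA] using (norm_pos_iff.mpr hp)
      have hSp : S = 2 * A p := by
        rcases mul_eq_zero.mp (hall p (mem_univ p)) with h' | h'
        · linarith
        · linarith
      have hrest : ∑ j ∈ univ.erase p, A j = A p := by
        have h3 : A p + ∑ j ∈ univ.erase p, A j = S :=
          Finset.add_sum_erase _ _ (mem_univ p)
        linarith
      have hex : ∃ q ∈ univ.erase p, A q ≠ 0 := by
        apply Finset.exists_ne_zero_of_sum_ne_zero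
        rw [hrest]; exact ne_of_gt hAp
      obtain ⟨q, hqmem, hAq⟩ := hex
      have hqp : q ≠ p := (Finset.mem_erase.mp hqmem).1
      have hAqpos : 0 < A q := lt_of_le_of_ne (hAnn q) (Ne.symm hAq)
      have hSq : S = 2 * A q := by
        rcases mul_eq_zero.mp (hall q (mem_univ q)) with h' | h'
        · exact absurd h' hAq
        · linarith
      have hR0 : ∑ i ∈ (univ.erase p).erase q, A i = 0 := by
        have h4 : A q + ∑ i ∈ (univ.erase p).erase q, A i = ∑ j ∈ univ.erase p, A j :=
          Finset.add_sum_erase _ _ hqmem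
        rw [hrest] at h4
        linarith
      have hRzero : ∀ i ∈ (univ.erase p).erase q, A i = 0 :=
        (Finset.sum_eq_zero_iff_of_nonneg fun i _ => hAnn i).mp hR0
      have hzR : ∀ i, i ≠ p → i ≠ q → z i = 0 := by
        intro i hip hiq
        have : A i = 0 := hRzero i (Finset.mem_erase.mpr ⟨hiq, Finset.mem_erase.mpr ⟨hip, mem_univ i⟩⟩)
        simpa [hA] using this
      have hzq : z q = - z p := by
        have hsplit := my_split hqp z
        rw [h] at hsplit
        have : ∑ i ∈ (univ.erase p).erase q, z i = 0 :=
          Finset.sum_eq_zero fun i hi => hzR i (Finset.mem_erase.mp (Finset.mem_erase.mp hi).2).1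
            (Finset.mem_erase.mp hi).1
        rw [this, add_zero] at hsplit
        linear_combination -hsplit
      exact Or.inr ⟨p, q, hqp.symm, z p, hp, rfl, hzq, hzR⟩
  · -- characterization → equality
    rintro (h0 | ⟨p, q, hpq, α, hα, hp, hq, hrest⟩)
    · have hS0 : S = 0 := Finset.sum_eq_zero fun i _ => by simp [hA, h0 i]
      simp [h0, hS0]
    · have hqp : q ≠ p := hpq.symm
      have hSval : S = 2 * ‖α‖ := by
        rw [hS, my_split hqp A]
        have h1 : ∑ i ∈ (univ.erase p).erase q, A i = 0 :=
          Finset.sum_eq_zero fun i hi => by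
            have := hrest i (Finset.mem_erase.mp (Finset.mem_erase.mp hi).2).1
              (Finset.mem_erase.mp hi).1
            simp [hA, this]
        rw [h1]
        simp [hA, hp, hq]
        ring
      have hSsq : ∑ i, A i ^ 2 = 2 * ‖α‖ ^ 2 := by
        rw [my_split hqp (fun i => A i ^ 2)]
        have h1 : ∑ i ∈ (univ.erase p).erase q, A i ^ 2 = 0 :=
          Finset.sum_eq_zero fun i hi => by
            have := hrest i (Finset.mem_erase.mp (Finset.mem_erase.mp hi).2).1
              (Finset.mem_erase.mp hi).1
            simp [hA, this]
        rw [h1]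
        simp [hA, hp, hq]
        ring
      show S ^ 2 = 2 * ∑ i, A i ^ 2
      rw [hSval, hSsq]
      ring
end

section
/- Let G be a finite simple graph with m edges, and let μ_1, …, μ_n ∈ ℂ be the roots (with multiplicity) of its permanental polynomial π(G,x). Then E_per(G) = Σ_{i=1}^n |μ_i| ≥ 2√m. -/
open Polynomial Matrix

/-- The permanental polynomial `per(x·I − A)` of a square matrix `A`. -/
noncomputable def permPoly {n : ℕ} {R : Type*} [CommRing R] (A : Matrix (Fin n) (Fin n) R) :
    Polynomial R :=
  ((Polynomial.X : R[X]) • (1 : Matrix (Fin n) (Fin n) R[X]) - A.map Polynomial.C).permanent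

/-- The permanental polynomial `π(G,x) = per(x·I − A(G))` of a graph, over `ℂ`. -/
noncomputable def graphPermPoly {n : ℕ} (G : SimpleGraph (Fin n)) : Polynomial ℂ :=
  letI := Classical.decRel G.Adj
  permPoly (G.adjMatrix ℂ)

/-- The permanental energy `E_per(G)`: the sum of the moduli of the roots (with
multiplicity) of the permanental polynomial of `G`. -/
noncomputable def perEnergy {n : ℕ} (G : SimpleGraph (Fin n)) : ℝ :=
  ((graphPermPoly G).roots.map (fun z : ℂ => ‖z‖)).sum

/-! ### Auxiliary multiset lemmas -/

lemma multiset_esymm_one {R : Type*} [CommSemiring R] (s : Multiset R) :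
    s.esymm 1 = s.sum := by
  simp [Multiset.esymm, Multiset.powersetCard_one, Multiset.map_map, Function.comp]

lemma multiset_esymm_two_cons {R : Type*} [CommSemiring R] (a : R) (s : Multiset R) :
    (a ::ₘ s).esymm 2 = a * s.sum + s.esymm 2 := by
  rw [Multiset.esymm, show (2 : ℕ) = 1 + 1 from rfl, Multiset.powersetCard_cons,
    Multiset.map_add, Multiset.sum_add, Multiset.map_map]
  rw [add_comm]
  congr 1
  rw [Multiset.powersetCard_one, Multiset.map_map]
  have : (Multiset.map ((Multiset.prod ∘ Multiset.cons a) ∘ singleton) s) =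
      Multiset.map (fun x => a * x) s := by
    apply Multiset.map_congr rfl
    intro x _
    simp
  rw [this]
  have := Multiset.sum_map_mul_left (s := s) (a := a) (f := fun x => x)
  simpa using this

lemma multiset_sum_sq {R : Type*} [CommRing R] (s : Multiset R) :
    s.sum ^ 2 = (s.map (· ^ 2)).sum + 2 * s.esymm 2 := by
  induction s using Multiset.induction with
  | empty => simp [Multiset.esymm, Multiset.powersetCard_eq_empty 2 (s := (0 : Multiset R)) (by simp)]
  | cons a s ih =>
      rw [Multiset.sum_cons, Multiset.map_cons, Multiset.sum_cons, multiset_esymm_two_cons]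
      ring_nf
      ring_nf at ih
      linear_combination ih

lemma abs_multiset_sum_le (s : Multiset ℂ) :
    (fun z : ℂ => ‖z‖) s.sum ≤ (s.map (fun z : ℂ => ‖z‖)).sum := by
  exact norm_multiset_sum_le s

lemma abs_esymm_le (s : Multiset ℂ) (k : ℕ) :
    (fun z : ℂ => ‖z‖) (s.esymm k) ≤ (s.map (fun z : ℂ => ‖z‖)).esymm k := by
  simp only [Multiset.esymm]
  rw [Multiset.powersetCard_map, Multiset.map_map]
  calc (fun z : ℂ => ‖z‖) ((s.powersetCard k).map Multiset.prod).sum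
      ≤ (((s.powersetCard k).map Multiset.prod).map (fun z : ℂ => ‖z‖)).sum :=
        abs_multiset_sum_le _
    _ = ((s.powersetCard k).map ((Multiset.prod) ∘ Multiset.map (fun z : ℂ => ‖z‖))).sum := by
        rw [Multiset.map_map]
        apply congrArg
        apply Multiset.map_congr rfl
        intro t _
        simpa [Function.comp] using map_multiset_prod (normHom : ℂ →*₀ ℝ) t

lemma abs_sum_sq_le (s : Multiset ℂ) :
    (fun z : ℂ => ‖z‖) ((s.map (· ^ 2)).sum) ≤ ((s.map (fun z : ℂ => ‖z‖)).map (· ^ 2)).sum := by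
  calc (fun z : ℂ => ‖z‖) ((s.map (· ^ 2)).sum)
      ≤ ((s.map (· ^ 2)).map (fun z : ℂ => ‖z‖)).sum := abs_multiset_sum_le _
    _ = ((s.map (fun z : ℂ => ‖z‖)).map (· ^ 2)).sum := by
        rw [Multiset.map_map, Multiset.map_map]
        apply congrArg
        apply Multiset.map_congr rfl
        intro z _
        simp [Function.comp, map_pow, norm_pow]

/-! ### The entries of `x·I − A(G)` and the coefficients of the permanental polynomial -/

section Graph

variable {n : ℕ} (G : SimpleGraph (Fin n)) [DecidableRel G.Adj]

/-- The matrix `x·I − A(G)` over `ℂ[X]`. -/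
noncomputable def MxG : Matrix (Fin n) (Fin n) (Polynomial ℂ) :=
  (Polynomial.X : ℂ[X]) • (1 : Matrix (Fin n) (Fin n) ℂ[X]) - (G.adjMatrix ℂ).map Polynomial.C

lemma MxG_apply (σ : Equiv.Perm (Fin n)) (i : Fin n) :
    MxG G (σ i) i =
      if σ i = i then Polynomial.X else -Polynomial.C ((G.adjMatrix ℂ) (σ i) i) := by
  simp only [MxG, Matrix.sub_apply, Matrix.smul_apply, Matrix.one_apply, Matrix.map_apply,
    smul_eq_mul]
  split_ifs with h
  · rw [h]
    simp [SimpleGraph.adjMatrix_apply]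
  · simp

lemma prod_MxG (σ : Equiv.Perm (Fin n)) :
    (∏ i, MxG G (σ i) i) =
      Polynomial.C (∏ i ∈ σ.support, -((G.adjMatrix ℂ) (σ i) i)) *
        Polynomial.X ^ (n - σ.support.card) := by
  rw [← Finset.prod_mul_prod_compl σ.support (fun i => MxG G (σ i) i)]
  congr 1
  · rw [map_prod]
    apply Finset.prod_congr rfl
    intro i hi
    rw [MxG_apply, if_neg (Equiv.Perm.mem_support.mp hi), map_neg]
  · rw [Finset.prod_congr rfl (fun i hi => ?_), Finset.prod_const,
      Finset.card_compl, Fintype.card_fin]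
    rw [MxG_apply, if_pos]
    exact Equiv.Perm.notMem_support.mp (Finset.mem_compl.mp hi)

lemma coeff_prod_MxG (σ : Equiv.Perm (Fin n)) (j : ℕ) :
    (∏ i, MxG G (σ i) i).coeff j =
      if n - σ.support.card = j then (∏ i ∈ σ.support, -((G.adjMatrix ℂ) (σ i) i)) else 0 := by
  rw [prod_MxG, Polynomial.coeff_C_mul, Polynomial.coeff_X_pow]
  simp only [eq_comm, mul_ite, mul_one, mul_zero]

lemma permPoly_adj_eq :
    permPoly (G.adjMatrix ℂ) = ∑ σ : Equiv.Perm (Fin n), ∏ i, MxG G (σ i) i :=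
  rfl

lemma coeff_permPoly_n : (permPoly (G.adjMatrix ℂ)).coeff n = 1 := by
  rw [permPoly_adj_eq, Polynomial.finset_sum_coeff]
  rw [Finset.sum_eq_single 1]
  · rw [coeff_prod_MxG]
    simp [Equiv.Perm.support_one]
  · intro σ _ hσ
    rw [coeff_prod_MxG, if_neg]
    have h2 : 1 < σ.support.card := Equiv.Perm.one_lt_card_support_of_ne_one hσ
    have hle : σ.support.card ≤ n := le_trans (Finset.card_le_univ _) (by simp)
    omega
  · intro h
    exact absurd (Finset.mem_univ 1) h

lemma natDegree_permPoly_le : (permPoly (G.adjMatrix ℂ)).natDegree ≤ n := by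
  rw [permPoly_adj_eq]
  apply Polynomial.natDegree_sum_le_of_forall_le
  intro σ _
  rw [prod_MxG]
  refine le_trans (Polynomial.natDegree_C_mul_le _ _) ?_
  rw [Polynomial.natDegree_X_pow]
  omega

lemma natDegree_permPoly : (permPoly (G.adjMatrix ℂ)).natDegree = n := by
  refine le_antisymm (natDegree_permPoly_le G) ?_
  apply Polynomial.le_natDegree_of_ne_zero
  rw [coeff_permPoly_n]
  exact one_ne_zero

lemma monic_permPoly : (permPoly (G.adjMatrix ℂ)).Monic := by
  unfold Polynomial.Monic Polynomial.leadingCoeff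
  rw [natDegree_permPoly, coeff_permPoly_n]

lemma coeff_permPoly_n_sub_one (hn : 2 ≤ n) :
    (permPoly (G.adjMatrix ℂ)).coeff (n - 1) = 0 := by
  rw [permPoly_adj_eq, Polynomial.finset_sum_coeff]
  apply Finset.sum_eq_zero
  intro σ _
  rw [coeff_prod_MxG, if_neg]
  have hle : σ.support.card ≤ n := le_trans (Finset.card_le_univ _) (by simp)
  rcases eq_or_ne σ 1 with h | h
  · subst h
    rw [Equiv.Perm.support_one]
    simp only [Finset.card_empty]
    omega
  · have h2 : 1 < σ.support.card := Equiv.Perm.one_lt_card_support_of_ne_one h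
    omega

lemma card_lt_adj_pairs (hn : 2 ≤ n) :
    (Finset.univ.filter fun p : Fin n × Fin n => p.1 < p.2 ∧ G.Adj p.1 p.2).card =
      G.edgeFinset.card := by
  have key : 2 * G.edgeFinset.card =
      (Finset.univ.filter fun p : Fin n × Fin n => G.Adj p.1 p.2).card := by
    rw [SimpleGraph.two_mul_card_edgeFinset]
  have hsplit : (Finset.univ.filter fun p : Fin n × Fin n => G.Adj p.1 p.2) =
      (Finset.univ.filter fun p : Fin n × Fin n => p.1 < p.2 ∧ G.Adj p.1 p.2) ∪
      (Finset.univ.filter fun p : Fin n × Fin n => p.2 < p.1 ∧ G.Adj p.1 p.2) := by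
    ext p
    simp only [Finset.mem_filter, Finset.mem_union, Finset.mem_univ, true_and]
    constructor
    · intro h
      rcases lt_or_gt_of_ne (G.ne_of_adj h) with hlt | hgt
      · exact Or.inl ⟨hlt, h⟩
      · exact Or.inr ⟨hgt, h⟩
    · rintro (⟨_, h⟩ | ⟨_, h⟩) <;> exact h
  have hdisj : Disjoint
      (Finset.univ.filter fun p : Fin n × Fin n => p.1 < p.2 ∧ G.Adj p.1 p.2)
      (Finset.univ.filter fun p : Fin n × Fin n => p.2 < p.1 ∧ G.Adj p.1 p.2) := by
    rw [Finset.disjoint_filter]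
    rintro p _ ⟨h1, _⟩ ⟨h2, _⟩
    exact absurd h2 (not_lt_of_gt h1)
  have hcardeq : (Finset.univ.filter fun p : Fin n × Fin n => p.2 < p.1 ∧ G.Adj p.1 p.2).card =
      (Finset.univ.filter fun p : Fin n × Fin n => p.1 < p.2 ∧ G.Adj p.1 p.2).card := by
    apply Finset.card_bij (fun p _ => p.swap)
    · rintro p hp
      simp only [Finset.mem_filter, Finset.mem_univ, true_and] at hp ⊢
      exact ⟨hp.1, hp.2.symm⟩
    · rintro p _ q _ h
      exact Prod.swap_injective h
    · rintro p hp
      simp only [Finset.mem_filter, Finset.mem_univ, true_and] at hp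
      refine ⟨p.swap, ?_, by simp⟩
      simp only [Finset.mem_filter, Finset.mem_univ, true_and, Prod.fst_swap, Prod.snd_swap]
      exact ⟨hp.1, hp.2.symm⟩
  rw [hsplit, Finset.card_union_of_disjoint hdisj, hcardeq] at key
  omega

lemma coeff_permPoly_n_sub_two (hn : 2 ≤ n) :
    (permPoly (G.adjMatrix ℂ)).coeff (n - 2) = (G.edgeFinset.card : ℂ) := by
  rw [permPoly_adj_eq, Polynomial.finset_sum_coeff]
  have step1 : ∀ σ : Equiv.Perm (Fin n),
      (∏ i, MxG G (σ i) i).coeff (n - 2) =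
        if σ.support.card = 2 then (∏ i ∈ σ.support, -((G.adjMatrix ℂ) (σ i) i)) else 0 := by
    intro σ
    rw [coeff_prod_MxG]
    have hle : σ.support.card ≤ n := le_trans (Finset.card_le_univ _) (by simp)
    have hne1 : σ.support.card ≠ 1 := Equiv.Perm.card_support_ne_one σ
    have h0 : σ.support.card = 0 ∨ 2 ≤ σ.support.card := by omega
    apply if_congr _ rfl rfl
    omega
  rw [Finset.sum_congr rfl (fun σ _ => step1 σ), ← Finset.sum_filter]
  -- now the sum over permutations with support of size 2, i.e. swaps
  have := card_lt_adj_pairs G hn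
  rw [← card_lt_adj_pairs G hn]
  have hsum : ∑ σ ∈ Finset.univ.filter (fun σ : Equiv.Perm (Fin n) => σ.support.card = 2),
      (∏ i ∈ σ.support, -((G.adjMatrix ℂ) (σ i) i)) =
      ∑ p ∈ Finset.univ.filter (fun p : Fin n × Fin n => p.1 < p.2),
        (if G.Adj p.1 p.2 then (1 : ℂ) else 0) := by
    symm
    apply Finset.sum_bij (fun p _ => Equiv.swap p.1 p.2)
    · intro p hp
      simp only [Finset.mem_filter, Finset.mem_univ, true_and] at hp ⊢
      exact Equiv.Perm.card_support_swap (ne_of_lt hp)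
    · intro p hp q hq h
      simp only [Finset.mem_filter, Finset.mem_univ, true_and] at hp hq
      have hps : (Equiv.swap p.1 p.2).support = (Equiv.swap q.1 q.2).support := by rw [h]
      rw [Equiv.Perm.support_swap (ne_of_lt hp), Equiv.Perm.support_swap (ne_of_lt hq)] at hps
      have : ({p.1, p.2} : Set (Fin n)) = {q.1, q.2} := by
        have := congrArg (fun s : Finset (Fin n) => (s : Set (Fin n))) hps
        simpa using this
      rcases Set.pair_eq_pair_iff.mp this with ⟨h1, h2⟩ | ⟨h1, h2⟩
      · exact Prod.ext h1 h2
      · exfalso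
        rw [h1, h2] at hp
        exact absurd hp (not_lt_of_gt hq)
    · intro σ hσ
      simp only [Finset.mem_filter, Finset.mem_univ, true_and] at hσ
      obtain ⟨x, y, hxy, rfl⟩ := Equiv.Perm.card_support_eq_two.mp hσ
      rcases lt_or_gt_of_ne hxy with hlt | hgt
      · exact ⟨(x, y), by simp only [Finset.mem_filter, Finset.mem_univ, true_and]; exact hlt,
          rfl⟩
      · exact ⟨(y, x), by simp only [Finset.mem_filter, Finset.mem_univ, true_and]; exact hgt,
          by rw [Equiv.swap_comm]⟩
    · intro p hp
      simp only [Finset.mem_filter, Finset.mem_univ, true_and] at hp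
      have hne : p.1 ≠ p.2 := ne_of_lt hp
      rw [Equiv.Perm.support_swap hne, Finset.prod_pair hne, Equiv.swap_apply_left,
        Equiv.swap_apply_right]
      simp only [SimpleGraph.adjMatrix_apply]
      by_cases hadj : G.Adj p.1 p.2
      · have hadj' : G.Adj p.2 p.1 := G.adj_symm hadj
        simp [hadj, hadj']
      · have hadj' : ¬ G.Adj p.2 p.1 := fun h => hadj (G.adj_symm h)
        simp [hadj, hadj']
  rw [hsum, Finset.sum_boole, Finset.filter_filter]

/-! ### Vieta: the sum and second symmetric function of the permanental roots -/

lemma graphPermPoly_eq : graphPermPoly G = permPoly (G.adjMatrix ℂ) := by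
  unfold graphPermPoly
  congr 1
  ext i j
  simp only [SimpleGraph.adjMatrix_apply]
  congr 1

lemma roots_card (hn : 2 ≤ n) :
    Multiset.card (graphPermPoly G).roots = n := by
  rw [graphPermPoly_eq]
  have hs : (permPoly (G.adjMatrix ℂ)).Splits :=
    IsAlgClosed.splits _
  rw [Polynomial.splits_iff_card_roots.mp hs, natDegree_permPoly]

lemma roots_sum_eq_zero (hn : 2 ≤ n) : (graphPermPoly G).roots.sum = 0 := by
  have hcard : Multiset.card (graphPermPoly G).roots = (graphPermPoly G).natDegree := by
    rw [roots_card G hn, graphPermPoly_eq, natDegree_permPoly]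
  have h := Polynomial.coeff_eq_esymm_roots_of_card hcard
    (k := n - 1) (by rw [graphPermPoly_eq, natDegree_permPoly]; omega)
  rw [graphPermPoly_eq, natDegree_permPoly] at h
  rw [coeff_permPoly_n_sub_one G hn] at h
  have h1 : n - (n - 1) = 1 := by omega
  rw [h1] at h
  have hlead : (permPoly (G.adjMatrix ℂ)).leadingCoeff = 1 := monic_permPoly G
  rw [hlead, multiset_esymm_one] at h
  rw [graphPermPoly_eq]
  linear_combination h

lemma roots_esymm_two (hn : 2 ≤ n) :
    (graphPermPoly G).roots.esymm 2 = (G.edgeFinset.card : ℂ) := by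
  have hcard : Multiset.card (graphPermPoly G).roots = (graphPermPoly G).natDegree := by
    rw [roots_card G hn, graphPermPoly_eq, natDegree_permPoly]
  have h := Polynomial.coeff_eq_esymm_roots_of_card hcard
    (k := n - 2) (by rw [graphPermPoly_eq, natDegree_permPoly]; omega)
  rw [graphPermPoly_eq, natDegree_permPoly] at h
  rw [coeff_permPoly_n_sub_two G hn] at h
  have h1 : n - (n - 2) = 2 := by omega
  rw [h1] at h
  have hlead : (permPoly (G.adjMatrix ℂ)).leadingCoeff = 1 := monic_permPoly G
  rw [hlead] at h
  rw [graphPermPoly_eq]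
  linear_combination -h

end Graph

/-- **Lower bound for the permanental energy.**
For every simple graph `G` with `m` edges, `E_per(G) ≥ 2√m`. -/
theorem perEnergy_ge_two_sqrt_edges {n : ℕ} (G : SimpleGraph (Fin n))
    [DecidableRel G.Adj] :
    perEnergy G ≥ 2 * Real.sqrt (G.edgeFinset.card : ℝ) := by
  by_cases hn : 2 ≤ n
  · set t := (graphPermPoly G).roots with ht
    set b := t.map (fun z : ℂ => ‖z‖) with hb
    set m := G.edgeFinset.card with hm
    have hb0 : 0 ≤ b.sum := by
      apply Multiset.sum_nonneg
      intro x hx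
      rw [hb] at hx
      obtain ⟨z, _, rfl⟩ := Multiset.mem_map.mp hx
      exact norm_nonneg _
    -- sum of squares of roots is -2m
    have hsum : t.sum = 0 := roots_sum_eq_zero G hn
    have hesymm : t.esymm 2 = (m : ℂ) := roots_esymm_two G hn
    have hsq : (t.map (· ^ 2)).sum = -(2 * m : ℂ) := by
      have := multiset_sum_sq t
      rw [hsum, hesymm] at this
      have h0 : (0 : ℂ) ^ 2 = 0 := by ring
      rw [h0] at this
      linear_combination -this
    -- abs bounds
    have h1 : (2 * m : ℝ) ≤ (b.map (· ^ 2)).sum := by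
      have := abs_sum_sq_le t
      rw [hsq] at this
      rw [← hb] at this
      calc (2 * m : ℝ) = (fun z : ℂ => ‖z‖) (-(2 * m : ℂ)) := by
            show _ = ‖-(2 * m : ℂ)‖
            rw [norm_neg]
            rw [show ((2 * m : ℂ)) = ((2 * m : ℝ) : ℂ) by push_cast; ring]
            rw [Complex.norm_real, Real.norm_eq_abs, abs_of_nonneg (by positivity)]
        _ ≤ (b.map (· ^ 2)).sum := this
    have h2 : (m : ℝ) ≤ b.esymm 2 := by
      have := abs_esymm_le t 2
      rw [hesymm, ← hb] at this
      calc (m : ℝ) = (fun z : ℂ => ‖z‖) ((m : ℝ) : ℂ) := by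
            show _ = ‖((m : ℝ) : ℂ)‖
            rw [Complex.norm_real, Real.norm_eq_abs, abs_of_nonneg (by positivity)]
        _ = (fun z : ℂ => ‖z‖) (m : ℂ) := by norm_cast
        _ ≤ b.esymm 2 := this
    have hkey : 4 * (m : ℝ) ≤ b.sum ^ 2 := by
      rw [multiset_sum_sq b]
      nlinarith [h1, h2]
    have hfinal : 2 * Real.sqrt (m : ℝ) ≤ b.sum := by
      have h4 : Real.sqrt (4 * m) ≤ Real.sqrt (b.sum ^ 2) := Real.sqrt_le_sqrt hkey
      rw [Real.sqrt_sq hb0] at h4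
      calc 2 * Real.sqrt (m : ℝ) = Real.sqrt 4 * Real.sqrt (m : ℝ) := by
            rw [show (4 : ℝ) = 2 ^ 2 by norm_num, Real.sqrt_sq (by norm_num)]
        _ = Real.sqrt (4 * m) := (Real.sqrt_mul (by norm_num) _).symm
        _ ≤ b.sum := h4
    exact hfinal
  · -- small graphs have no edges
    have hm : G.edgeFinset.card = 0 := by
      rw [Finset.card_eq_zero, Finset.eq_empty_iff_forall_notMem]
      intro e he
      rw [SimpleGraph.mem_edgeFinset] at he
      induction e with
      | _ x y =>
        have hne : x ≠ y := G.ne_of_adj he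
        exact hne (Fin.ext (by omega))
    rw [hm]
    simp only [Nat.cast_zero, Real.sqrt_zero, mul_zero, ge_iff_le]
    apply Multiset.sum_nonneg
    intro x hx
    obtain ⟨z, _, rfl⟩ := Multiset.mem_map.mp hx
    exact norm_nonneg _
end

section
/- Let G be a finite simple graph on n vertices with spectral radius ρ = ρ(G). Then E_per(G) ≤ n·ρ. -/
open Polynomial Matrix

/-- The spectral radius of a real square matrix: the supremum of the moduli of the
roots of its characteristic polynomial (over `ℂ`). -/
noncomputable def specRadius {n : ℕ} (A : Matrix (Fin n) (Fin n) ℝ) : ℝ :=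
  sSup {r : ℝ | ∃ μ : ℂ, (A.map Complex.ofReal).charpoly.IsRoot μ ∧ ‖μ‖ = r}

namespace PerProof

open Equiv Equiv.Perm Finset

variable {n : ℕ} {R : Type*} [CommRing R]

/-! ### A generic cycle-expansion for determinant-like sums -/

def detLike (ε : Perm (Fin n) → R) (M : Matrix (Fin n) (Fin n) R) : R :=
  ∑ σ : Perm (Fin n), ε σ * ∏ i, M (σ i) i

def pad (M : Matrix (Fin n) (Fin n) R) (K : Finset (Fin n)) : Matrix (Fin n) (Fin n) R :=
  Matrix.of fun i j => if i ∈ K ∨ j ∈ K then (if i = j then (1 : R) else 0) else M i j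

lemma fix_compl {K : Finset (Fin n)} {τ : Perm (Fin n)} (hτ : ∀ i ∈ K, τ i = i)
    {i : Fin n} (hi : i ∉ K) : τ i ∉ K := by
  intro h
  have h2 : τ (τ i) = τ i := hτ _ h
  exact hi (by simpa [τ.injective h2] using h)

lemma padsum (ε : Perm (Fin n) → R) (M : Matrix (Fin n) (Fin n) R) (K : Finset (Fin n)) :
    detLike ε (pad M K) =
      ∑ τ ∈ univ.filter (fun τ : Perm (Fin n) => ∀ i ∈ K, τ i = i),
        ε τ * ∏ i ∈ Kᶜ, M (τ i) i := by
  classical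
  rw [detLike, ← Finset.sum_filter_add_sum_filter_not univ
    (fun τ : Perm (Fin n) => ∀ i ∈ K, τ i = i)]
  have h2 : ∀ τ ∈ univ.filter (fun τ : Perm (Fin n) => ¬ ∀ i ∈ K, τ i = i),
      ε τ * ∏ i, (pad M K) (τ i) i = 0 := by
    intro τ hτ
    simp only [mem_filter, not_forall] at hτ
    obtain ⟨i, hiK, hne⟩ := hτ.2
    have h0 : ∏ k, (pad M K) (τ k) k = 0 :=
      Finset.prod_eq_zero (Finset.mem_univ i) (by simp [pad, hiK, hne])
    rw [h0, mul_zero]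
  rw [Finset.sum_eq_zero h2, add_zero]
  refine Finset.sum_congr rfl fun τ hτ => ?_
  simp only [mem_filter] at hτ
  congr 1
  rw [← Finset.prod_mul_prod_compl K]
  have hK : ∀ i ∈ K, (pad M K) (τ i) i = 1 := by
    intro i hi
    rw [hτ.2 i hi]
    simp [pad, hi]
  rw [Finset.prod_congr rfl hK, Finset.prod_const_one, one_mul]
  refine Finset.prod_congr rfl fun i hi => ?_
  rw [Finset.mem_compl] at hi
  have h3 := fix_compl hτ.2 hi
  simp [pad, hi, h3]

lemma cycleExpansion (ε : Perm (Fin n) → R) (hε : ∀ a b, ε (a * b) = ε a * ε b)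
    (M : Matrix (Fin n) (Fin n) R) (v : Fin n)
    (C : Finset (Perm (Fin n))) (hC : ∀ c, c ∈ C ↔ c.IsCycle ∧ c v ≠ v) :
    detLike ε M = M v v * detLike ε (pad M {v}) +
      ∑ c ∈ C, (ε c * ∏ i ∈ c.support, M (c i) i) * detLike ε (pad M c.support) := by
  classical
  rw [detLike, ← Finset.sum_filter_add_sum_filter_not univ
    (fun σ : Perm (Fin n) => σ v = v)]
  congr 1
  · -- fixed-point part
    rw [padsum, Finset.mul_sum]
    have hfil : (univ.filter (fun τ : Perm (Fin n) => ∀ i ∈ ({v} : Finset (Fin n)), τ i = i)) =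
        univ.filter (fun σ : Perm (Fin n) => σ v = v) := by
      apply Finset.filter_congr; intro τ _; simp
    rw [hfil]
    refine Finset.sum_congr rfl fun σ hσ => ?_
    simp only [mem_filter] at hσ
    rw [← mul_assoc, mul_comm (M v v) (ε σ), mul_assoc]
    congr 1
    rw [Fintype.prod_eq_mul_prod_compl v (fun i => M (σ i) i), hσ.2]
  · -- moving part
    rw [← Finset.sum_fiberwise_of_maps_to (g := fun σ : Perm (Fin n) => σ.cycleOf v)
      (t := C) ?hmap (f := fun σ => ε σ * ∏ i, M (σ i) i)]
    case hmap =>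
      intro σ hσ
      simp only [mem_filter, mem_univ, true_and] at hσ
      rw [hC]
      exact ⟨isCycle_cycleOf σ hσ, by rwa [cycleOf_apply_self]⟩
    refine Finset.sum_congr rfl fun c hc => ?_
    rw [hC] at hc
    have hvsupp : v ∈ c.support := mem_support.mpr hc.2
    rw [padsum, Finset.mul_sum]
    refine Finset.sum_nbij' (i := fun σ => c⁻¹ * σ) (j := fun τ => c * τ)
      ?_ ?_ ?_ ?_ ?_
    · intro σ hσ
      simp only [mem_filter, mem_univ, true_and] at hσ ⊢
      intro i hi
      rw [← hσ.2] at hi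
      have hsc : σ.SameCycle v i := (mem_support_cycleOf_iff.mp hi).1
      have h1 : (σ.cycleOf v) i = σ i := hsc.cycleOf_apply
      rw [hσ.2] at h1
      simp [Perm.mul_apply, ← h1]
    · intro τ hτ
      simp only [mem_filter, mem_univ, true_and] at hτ ⊢
      have hτv : τ v = v := hτ v hvsupp
      have hres : ∀ a ∈ c.support, c a = (c * τ) a := by
        intro a ha; simp [Perm.mul_apply, hτ a ha]
      have hmem : c ∈ (c * τ).cycleFactorsFinset :=
        mem_cycleFactorsFinset_iff.mpr ⟨hc.1, hres⟩
      refine ⟨?_, (cycle_is_cycleOf hvsupp hmem).symm⟩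
      simp only [Perm.mul_apply, hτv]
      exact hc.2
    · intro σ _; simp
    · intro τ _; simp
    · intro σ hσ
      simp only [mem_filter, mem_univ, true_and] at hσ
      have hτ : ∀ i ∈ c.support, (c⁻¹ * σ) i = i := by
        intro i hi
        rw [← hσ.2] at hi
        have hsc : σ.SameCycle v i := (mem_support_cycleOf_iff.mp hi).1
        have h1 : (σ.cycleOf v) i = σ i := hsc.cycleOf_apply
        rw [hσ.2] at h1
        simp [Perm.mul_apply, ← h1]
      have hεσ : ε σ = ε c * ε (c⁻¹ * σ) := by
        rw [← hε]; congr 1; simp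
      have hprod : (∏ i, M (σ i) i) =
          (∏ i ∈ c.support, M (c i) i) * ∏ i ∈ c.supportᶜ, M ((c⁻¹ * σ) i) i := by
        rw [← Finset.prod_mul_prod_compl c.support (fun i => M (σ i) i)]
        congr 1
        · refine Finset.prod_congr rfl fun i hi => ?_
          have h2 : c ((c⁻¹ * σ) i) = c i := congrArg c (hτ i hi)
          simp only [Perm.mul_apply, Perm.inv_def, Equiv.apply_symm_apply] at h2
          rw [h2]
        · refine Finset.prod_congr rfl fun i hi => ?_
          rw [Finset.mem_compl] at hi
          have h1 : (c⁻¹ * σ) i ∉ c.support := fix_compl hτ hi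
          have h3 : c ((c⁻¹ * σ) i) = (c⁻¹ * σ) i := notMem_support.mp h1
          have h4 : c ((c⁻¹ * σ) i) = σ i := by simp [Perm.mul_apply]
          rw [← h4, h3]
      rw [hεσ, hprod]
      ring

/-! ### Specialization to permanent and determinant of the bordered matrices -/

lemma permanent_eq_detLike (M : Matrix (Fin n) (Fin n) R) :
    M.permanent = detLike (fun _ => (1 : R)) M := by
  simp [Matrix.permanent, detLike]

lemma det_eq_detLike (M : Matrix (Fin n) (Fin n) R) :
    M.det = detLike (fun σ => ((Perm.sign σ : ℤ) : R)) M := by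
  rw [Matrix.det_apply, detLike]
  refine Finset.sum_congr rfl fun σ _ => ?_
  rw [Units.smul_def, zsmul_eq_mul]

/-- the matrix `zI - A` restricted to the block `S×S`, identity elsewhere. -/
def Mmat (A : Matrix (Fin n) (Fin n) R) (S : Finset (Fin n)) (z : R) :
    Matrix (Fin n) (Fin n) R :=
  Matrix.of fun i j =>
    if i ∈ S ∧ j ∈ S then (if i = j then z else 0) - A i j else (if i = j then 1 else 0)

lemma pad_Mmat (A : Matrix (Fin n) (Fin n) R) (S K : Finset (Fin n)) (z : R) :
    pad (Mmat A S z) K = Mmat A (S \ K) z := by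
  ext i j
  by_cases hiK : i ∈ K <;> by_cases hjK : j ∈ K <;>
    by_cases hiS : i ∈ S <;> by_cases hjS : j ∈ S <;>
      simp [pad, Mmat, hiK, hjK, hiS, hjS]

noncomputable def Fz (A : Matrix (Fin n) (Fin n) ℝ) (S : Finset (Fin n)) (z : ℂ) : ℂ :=
  (Mmat (A.map (fun x : ℝ => (x : ℂ))) S z).permanent

noncomputable def Gd (A : Matrix (Fin n) (Fin n) ℝ) (S : Finset (Fin n)) (t : ℝ) : ℝ :=
  (Mmat A S t).det

noncomputable def wR (A : Matrix (Fin n) (Fin n) ℝ) (S : Finset (Fin n)) (c : Perm (Fin n)) :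
    ℝ := ∏ i ∈ c.support, (if c i ∈ S ∧ i ∈ S then A (c i) i else 0)

lemma wR_nonneg (A : Matrix (Fin n) (Fin n) ℝ) (hA : ∀ i j, 0 ≤ A i j)
    (S : Finset (Fin n)) (c : Perm (Fin n)) : 0 ≤ wR A S c := by
  refine Finset.prod_nonneg fun i _ => ?_
  by_cases h : c i ∈ S ∧ i ∈ S <;> simp [wR, h, hA]

lemma wR_zero_of_not_sub (A : Matrix (Fin n) (Fin n) ℝ) (S : Finset (Fin n))
    (c : Perm (Fin n)) (h : ¬ c.support ⊆ S) : wR A S c = 0 := by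
  obtain ⟨i, hi, hiS⟩ := Finset.not_subset.mp h
  exact Finset.prod_eq_zero hi (by simp [hiS])

lemma Fz_rec (A : Matrix (Fin n) (Fin n) ℝ) (hdiag : ∀ i, A i i = 0) (S : Finset (Fin n))
    (v : Fin n) (hv : v ∈ S) (z : ℂ)
    (C : Finset (Perm (Fin n))) (hC : ∀ c, c ∈ C ↔ c.IsCycle ∧ c v ≠ v) :
    Fz A S z = z * Fz A (S.erase v) z +
      ∑ c ∈ C, (∏ i ∈ c.support,
          (Mmat (A.map (fun x : ℝ => (x : ℂ))) S z) (c i) i) * Fz A (S \ c.support) z := by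
  rw [Fz, permanent_eq_detLike,
    cycleExpansion _ (fun a b => (one_mul (1:ℂ)).symm) _ v C hC]
  simp only [pad_Mmat, ← Finset.erase_eq]
  have hvv : (Mmat (A.map (fun x : ℝ => (x : ℂ))) S z) v v = z := by
    simp [Mmat, hv, hdiag v]
  rw [hvv]
  congr 1
  · rw [Fz, permanent_eq_detLike]
  · refine Finset.sum_congr rfl fun c hc => ?_
    rw [Fz, permanent_eq_detLike, one_mul]

lemma abs_cycle_weight (A : Matrix (Fin n) (Fin n) ℝ) (hA : ∀ i j, 0 ≤ A i j)
    (S : Finset (Fin n)) (z : ℂ) (c : Perm (Fin n)) :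
    ‖∏ i ∈ c.support, (Mmat (A.map (fun x : ℝ => (x : ℂ))) S z) (c i) i‖
      = wR A S c := by
  rw [norm_prod, wR]
  refine Finset.prod_congr rfl fun i hi => ?_
  have hne : c i ≠ i := mem_support.mp hi
  by_cases h : c i ∈ S ∧ i ∈ S
  · simp [Mmat, h, hne, Complex.norm_real, Real.norm_of_nonneg (hA (c i) i)]
  · simp [Mmat, h, hne]

lemma Gd_rec (A : Matrix (Fin n) (Fin n) ℝ) (hdiag : ∀ i, A i i = 0) (S : Finset (Fin n))
    (v : Fin n) (hv : v ∈ S) (t : ℝ)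
    (C : Finset (Perm (Fin n))) (hC : ∀ c, c ∈ C ↔ c.IsCycle ∧ c v ≠ v) :
    Gd A S t = t * Gd A (S.erase v) t - ∑ c ∈ C, wR A S c * Gd A (S \ c.support) t := by
  have hsgn : ∀ a b : Perm (Fin n),
      (((Perm.sign (a * b) : ℤ) : ℝ)) = ((Perm.sign a : ℤ) : ℝ) * ((Perm.sign b : ℤ) : ℝ) := by
    intro a b
    rw [_root_.map_mul]
    push_cast [Units.val_mul]
    ring
  rw [Gd, det_eq_detLike, cycleExpansion _ hsgn _ v C hC]
  simp only [pad_Mmat, ← Finset.erase_eq]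
  have hvv : (Mmat A S t) v v = t := by simp [Mmat, hv, hdiag v]
  rw [hvv, sub_eq_add_neg, ← Finset.sum_neg_distrib]
  congr 1
  · rw [Gd, det_eq_detLike]
  · refine Finset.sum_congr rfl fun c hc => ?_
    rw [hC] at hc
    rw [Gd, det_eq_detLike]
    have hsign : ((Perm.sign c : ℤ) : ℝ) = -(-1) ^ c.support.card := by
      rw [hc.1.sign]; push_cast; ring
    have hfac : ∀ i ∈ c.support, (Mmat A S t) (c i) i
        = (-1) * (if c i ∈ S ∧ i ∈ S then A (c i) i else 0) := by
      intro i hi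
      have hne : c i ≠ i := mem_support.mp hi
      by_cases h : c i ∈ S ∧ i ∈ S <;> simp [Mmat, h, hne]
    have hprod : (∏ i ∈ c.support, (Mmat A S t) (c i) i)
        = (-1) ^ c.support.card * wR A S c := by
      rw [Finset.prod_congr rfl hfac, Finset.prod_mul_distrib, Finset.prod_const, wR]
    rw [hsign, hprod]
    have h2 : ((-1 : ℝ)) ^ c.support.card * (-1) ^ c.support.card = 1 := by
      rw [← pow_add]
      exact Even.neg_one_pow ⟨c.support.card, rfl⟩
    calc -(-1 : ℝ) ^ #c.support * ((-1) ^ #c.support * wR A S c) *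
          detLike (fun σ => ((Perm.sign σ : ℤ) : ℝ)) (Mmat A (S \ c.support) t)
        = -(((-1 : ℝ) ^ #c.support * (-1) ^ #c.support) * (wR A S c *
          detLike (fun σ => ((Perm.sign σ : ℤ) : ℝ)) (Mmat A (S \ c.support) t))) := by ring
      _ = -(wR A S c * detLike (fun σ => ((Perm.sign σ : ℤ) : ℝ)) (Mmat A (S \ c.support) t)) := by
          rw [h2, one_mul]

/-! ### Spectral facts -/

lemma rayleigh_bound (A : Matrix (Fin n) (Fin n) ℝ) (hA : A.IsHermitian) (ρ : ℝ)
    (hρ : ∀ i, hA.eigenvalues i ≤ ρ) (x : Fin n → ℝ) :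
    x ⬝ᵥ A *ᵥ x ≤ ρ * (x ⬝ᵥ x) := by
  classical
  set U : Matrix (Fin n) (Fin n) ℝ := (hA.eigenvectorUnitary : Matrix (Fin n) (Fin n) ℝ)
  have hspec : A = U * diagonal (RCLike.ofReal ∘ hA.eigenvalues) * star U :=
    hA.spectral_theorem
  have hdiag : (RCLike.ofReal ∘ hA.eigenvalues : Fin n → ℝ) = hA.eigenvalues := by
    funext i; simp [RCLike.ofReal]
  set w : Fin n → ℝ := star U *ᵥ x with hw
  rw [hdiag] at hspec
  have hxAx : x ⬝ᵥ A *ᵥ x = w ⬝ᵥ (diagonal hA.eigenvalues) *ᵥ w := by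
    conv_lhs => rw [hspec]
    rw [← mulVec_mulVec, ← mulVec_mulVec]
    rw [dotProduct_mulVec x U]
    congr 1
    show x ᵥ* U = w
    rw [hw]
    show x ᵥ* U = star U *ᵥ x
    rw [star_eq_conjTranspose, conjTranspose_eq_transpose_of_trivial, mulVec_transpose]
  have hUU : U * Uᵀ = 1 := by
    have h1 := Unitary.mul_star_self_of_mem (hA.eigenvectorUnitary).2
    simpa [star_eq_conjTranspose, conjTranspose_eq_transpose_of_trivial] using h1
  have hww : w ⬝ᵥ w = x ⬝ᵥ x := by
    rw [hw]
    show (star U *ᵥ x) ⬝ᵥ (star U *ᵥ x) = x ⬝ᵥ x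
    rw [star_eq_conjTranspose, conjTranspose_eq_transpose_of_trivial]
    rw [dotProduct_mulVec, vecMul_transpose, mulVec_mulVec, hUU, one_mulVec]
  rw [hxAx, ← hww]
  simp only [dotProduct, mulVec_diagonal]
  rw [Finset.mul_sum]
  refine Finset.sum_le_sum fun i _ => ?_
  have h1 : w i * (hA.eigenvalues i * w i) = hA.eigenvalues i * (w i * w i) := by ring
  rw [h1]
  exact mul_le_mul_of_nonneg_right (hρ i) (mul_self_nonneg _) |>.trans_eq (by ring) |>.trans_eq rfl

lemma det_smul_sub_eq_zero (A : Matrix (Fin n) (Fin n) ℝ) (hA : A.IsHermitian) (j : Fin n) :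
    det ((hA.eigenvalues j) • (1 : Matrix (Fin n) (Fin n) ℝ) - A) = 0 := by
  classical
  rw [← Matrix.exists_mulVec_eq_zero_iff]
  have hev := hA.mulVec_eigenvectorBasis j
  refine ⟨(WithLp.equiv 2 ((i : Fin n) → ℝ)) (hA.eigenvectorBasis j), ?_, ?_⟩
  · intro h0
    have h1 := hA.eigenvectorBasis.orthonormal.1 j
    have h2 : (hA.eigenvectorBasis j : EuclideanSpace ℝ (Fin n)) = 0 := by
      ext i
      exact congrFun h0 i
    rw [h2] at h1
    simp at h1
  · rw [sub_mulVec, smul_mulVec, one_mulVec, WithLp.equiv_apply, hev]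
    simp

lemma Mmat_posDef (A : Matrix (Fin n) (Fin n) ℝ) (hA : A.IsHermitian) (ρ t : ℝ)
    (hray : ∀ x : Fin n → ℝ, x ⬝ᵥ A *ᵥ x ≤ ρ * (x ⬝ᵥ x)) (ht : ρ < t)
    (S : Finset (Fin n)) : (Mmat A S t).PosDef := by
  classical
  rw [posDef_iff_dotProduct_mulVec]
  constructor
  · rw [IsHermitian, conjTranspose_eq_transpose_of_trivial]
    ext i j
    have hAij : A j i = A i j := by
      have h := congrFun (congrFun hA j) i
      simpa [conjTranspose_apply] using h.symm
    by_cases hi : i ∈ S <;> by_cases hj : j ∈ S <;>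
      simp [Mmat, transpose_apply, hi, hj, hAij, eq_comm]
  · intro x hx
    set xS : Fin n → ℝ := fun i => if i ∈ S then x i else 0 with hxS
    set xc : Fin n → ℝ := fun i => if i ∈ S then 0 else x i with hxc
    have hsplit : Mmat A S t = diagonal (fun i => if i ∈ S then t else 1)
        - Matrix.of (fun i j => if i ∈ S ∧ j ∈ S then A i j else 0) := by
      ext i j
      by_cases hi : i ∈ S <;> by_cases hj : j ∈ S <;>
        by_cases hij : i = j <;>
        simp [Mmat, diagonal_apply, hi, hj, hij]
    have hquad : x ⬝ᵥ (Mmat A S t) *ᵥ x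
        = (t * (xS ⬝ᵥ xS) + xc ⬝ᵥ xc) - xS ⬝ᵥ A *ᵥ xS := by
      rw [hsplit, sub_mulVec, dotProduct_sub]
      congr 1
      · simp only [dotProduct, mulVec_diagonal]
        rw [Finset.mul_sum, ← Finset.sum_add_distrib]
        refine Finset.sum_congr rfl fun i _ => ?_
        by_cases hi : i ∈ S <;> simp [hxS, hxc, hi] <;> ring
      · have hBx : (Matrix.of (fun i j => if i ∈ S ∧ j ∈ S then A i j else 0)) *ᵥ x
            = fun i => if i ∈ S then (A *ᵥ xS) i else 0 := by
          funext i
          by_cases hi : i ∈ S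
          · simp only [mulVec, dotProduct, Matrix.of_apply]
            rw [if_pos hi]
            refine Finset.sum_congr rfl fun j _ => ?_
            by_cases hj : j ∈ S <;> simp [hi, hj, hxS]
          · simp only [mulVec, dotProduct, Matrix.of_apply]
            rw [if_neg hi]
            refine Finset.sum_eq_zero fun j _ => ?_
            simp [hi]
        rw [hBx]
        simp only [dotProduct]
        refine Finset.sum_congr rfl fun i _ => ?_
        by_cases hi : i ∈ S <;> simp [hxS, hi]
    have hstar : star x = x := by funext i; simp
    rw [hstar, hquad]
    have hb := hray xS
    have hnn : ∀ y : Fin n → ℝ, 0 ≤ y ⬝ᵥ y :=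
      fun y => Finset.sum_nonneg fun i _ => mul_self_nonneg _
    obtain ⟨i0, hi0⟩ : ∃ i, x i ≠ 0 := by
      by_contra h
      push_neg at h
      exact hx (funext h)
    have key : (t - ρ) * (xS ⬝ᵥ xS) + xc ⬝ᵥ xc > 0 := by
      by_cases hi0S : i0 ∈ S
      · have h1 : 0 < xS ⬝ᵥ xS := by
          refine Finset.sum_pos' (fun i _ => mul_self_nonneg _) ⟨i0, Finset.mem_univ _, ?_⟩
          have h5 : xS i0 = x i0 := by simp [hxS, hi0S]
          rw [h5]
          exact mul_self_pos.mpr hi0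
        have h2 : 0 < (t - ρ) * (xS ⬝ᵥ xS) := mul_pos (by linarith) h1
        have h3 := hnn xc
        linarith
      · have h1 : 0 < xc ⬝ᵥ xc := by
          refine Finset.sum_pos' (fun i _ => mul_self_nonneg _) ⟨i0, Finset.mem_univ _, ?_⟩
          have h5 : xc i0 = x i0 := by simp [hxc, hi0S]
          rw [h5]
          exact mul_self_pos.mpr hi0
        have h2 : 0 ≤ (t - ρ) * (xS ⬝ᵥ xS) := mul_nonneg (by linarith) (hnn xS)
        linarith
    linarith

lemma Gd_pos (A : Matrix (Fin n) (Fin n) ℝ) (hA : A.IsHermitian) (ρ t : ℝ)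
    (hray : ∀ x : Fin n → ℝ, x ⬝ᵥ A *ᵥ x ≤ ρ * (x ⬝ᵥ x)) (ht : ρ < t)
    (S : Finset (Fin n)) : 0 < Gd A S t :=
  (Mmat_posDef A hA ρ t hray ht S).det_pos

/-! ### character polynomial facts -/

lemma eval_charpoly_real (A : Matrix (Fin n) (Fin n) ℝ) (x : ℝ) :
    (Matrix.charpoly A).eval x = det (x • (1 : Matrix (Fin n) (Fin n) ℝ) - A) := by
  rw [Matrix.charpoly, ← Polynomial.coe_evalRingHom, RingHom.map_det]
  congr 1
  ext i j
  by_cases h : i = j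
  · subst h
    simp [charmatrix_apply_eq, Matrix.one_apply]
  · simp [charmatrix_apply_ne _ _ _ h, Matrix.one_apply, h]

lemma eigen_isRoot (A : Matrix (Fin n) (Fin n) ℝ) (hA : A.IsHermitian) (j : Fin n) :
    (A.map Complex.ofReal).charpoly.IsRoot ((hA.eigenvalues j : ℝ) : ℂ) := by
  have h1 : (A.map Complex.ofReal) = A.map Complex.ofRealHom := rfl
  rw [IsRoot, h1, Matrix.charpoly_map, Polynomial.eval_map]
  show Polynomial.eval₂ Complex.ofRealHom (Complex.ofRealHom (hA.eigenvalues j)) A.charpoly = 0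
  rw [Polynomial.eval₂_at_apply]
  rw [eval_charpoly_real A (hA.eigenvalues j), det_smul_sub_eq_zero A hA j]
  simp

noncomputable def specSet (A : Matrix (Fin n) (Fin n) ℝ) : Set ℝ :=
  {r : ℝ | ∃ μ : ℂ, (A.map Complex.ofReal).charpoly.IsRoot μ ∧ ‖μ‖ = r}

lemma specSet_bddAbove (A : Matrix (Fin n) (Fin n) ℝ) : BddAbove (specSet A) := by
  have hmono : (Matrix.charpoly (A.map Complex.ofReal)).Monic := Matrix.charpoly_monic _
  have hne : (Matrix.charpoly (A.map Complex.ofReal)) ≠ 0 := hmono.ne_zero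
  have hss : specSet A ⊆ (fun z : ℂ => ‖z‖) ''
      ((Matrix.charpoly (A.map Complex.ofReal)).roots.toFinset : Set ℂ) := by
    rintro r ⟨μ, hroot, habs⟩
    refine ⟨μ, ?_, habs⟩
    simp only [Finset.coe_sort_coe, Multiset.mem_toFinset, Finset.mem_coe]
    rw [Polynomial.mem_roots hne]
    exact hroot
  refine BddAbove.mono hss ?_
  exact Set.Finite.bddAbove ((Set.toFinite _).image _)

lemma specSet_nonempty (A : Matrix (Fin n) (Fin n) ℝ) (hn : 0 < n) :
    (specSet A).Nonempty := by
  have hdeg : (Matrix.charpoly (A.map Complex.ofReal)).natDegree = n := by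
    rw [Matrix.charpoly_natDegree_eq_dim, Fintype.card_fin]
  have hd : 0 < (Matrix.charpoly (A.map Complex.ofReal)).degree := by
    rw [Polynomial.degree_eq_natDegree (Matrix.charpoly_monic _).ne_zero, hdeg]
    exact_mod_cast hn
  obtain ⟨μ, hμ⟩ := Complex.exists_root hd
  exact ⟨‖μ‖, μ, hμ, rfl⟩

lemma specRadius_nonneg' (A : Matrix (Fin n) (Fin n) ℝ) (hn : 0 < n) :
    0 ≤ sSup (specSet A) := by
  obtain ⟨r, μ, hr, habs⟩ := specSet_nonempty A hn
  have h1 : r ∈ specSet A := ⟨μ, hr, habs⟩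
  have h2 := le_csSup (specSet_bddAbove A) h1
  have h3 : 0 ≤ r := habs ▸ (norm_nonneg μ)
  linarith

lemma eigen_le_specRadius (A : Matrix (Fin n) (Fin n) ℝ) (hA : A.IsHermitian) (j : Fin n) :
    hA.eigenvalues j ≤ sSup (specSet A) := by
  have h1 : ‖((hA.eigenvalues j : ℝ) : ℂ)‖ ∈ specSet A :=
    ⟨_, eigen_isRoot A hA j, rfl⟩
  have h2 := le_csSup (specSet_bddAbove A) h1
  have h3 : hA.eigenvalues j ≤ ‖((hA.eigenvalues j : ℝ) : ℂ)‖ := by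
    rw [Complex.norm_real, Real.norm_eq_abs]
    exact le_abs_self _
  linarith

/-! ### the triangle-inequality bound and empty values -/

lemma Fz_abs_lower (A : Matrix (Fin n) (Fin n) ℝ) (hA0 : ∀ i j, 0 ≤ A i j)
    (hdiag : ∀ i, A i i = 0) (t : ℝ) (z : ℂ) (hzt : ‖z‖ = t)
    (S : Finset (Fin n)) (v : Fin n) (hv : v ∈ S)
    (C : Finset (Perm (Fin n))) (hC : ∀ c, c ∈ C ↔ c.IsCycle ∧ c v ≠ v) :
    t * ‖Fz A (S.erase v) z‖ -
      (∑ c ∈ C, wR A S c * ‖Fz A (S \ c.support) z‖)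
    ≤ ‖Fz A S z‖ := by
  have hrec := Fz_rec A hdiag S v hv z C hC
  have h1 : ‖z * Fz A (S.erase v) z‖ = t * ‖Fz A (S.erase v) z‖ := by
    rw [norm_mul, hzt]
  have h2 : ‖∑ c ∈ C, (∏ i ∈ c.support,
        (Mmat (A.map (fun x : ℝ => (x : ℂ))) S z) (c i) i) * Fz A (S \ c.support) z‖
      ≤ ∑ c ∈ C, wR A S c * ‖Fz A (S \ c.support) z‖ := by
    refine le_trans (norm_sum_le _ _) ?_
    refine Finset.sum_le_sum fun c _ => ?_
    rw [norm_mul, abs_cycle_weight A hA0 S z c]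
  have h3 : t * ‖Fz A (S.erase v) z‖
      ≤ ‖Fz A S z‖ + ∑ c ∈ C, wR A S c * ‖Fz A (S \ c.support) z‖ := by
    rw [← h1]
    calc ‖z * Fz A (S.erase v) z‖
        = ‖Fz A S z - ∑ c ∈ C, (∏ i ∈ c.support,
            (Mmat (A.map (fun x : ℝ => (x : ℂ))) S z) (c i) i) * Fz A (S \ c.support) z‖ := by
          rw [hrec]; ring_nf
      _ ≤ ‖Fz A S z‖ + ‖∑ c ∈ C, (∏ i ∈ c.support,
            (Mmat (A.map (fun x : ℝ => (x : ℂ))) S z) (c i) i) * Fz A (S \ c.support) z‖ := by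
          exact (norm_sub_le _ _)
      _ ≤ _ := by linarith
  linarith

lemma Fz_empty (A : Matrix (Fin n) (Fin n) ℝ) (z : ℂ) : Fz A ∅ z = 1 := by
  have h : Mmat (A.map (fun x : ℝ => (x : ℂ))) (∅ : Finset (Fin n)) z = 1 := by
    ext i j
    simp [Mmat, Matrix.one_apply]
  rw [Fz, h, Matrix.permanent_one]

lemma Gd_empty (A : Matrix (Fin n) (Fin n) ℝ) (t : ℝ) : Gd A ∅ t = 1 := by
  have h : Mmat A (∅ : Finset (Fin n)) t = 1 := by
    ext i j
    simp [Mmat, Matrix.one_apply]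
  rw [Gd, h, Matrix.det_one]

/-! ### the main induction -/

section Main

variable (A : Matrix (Fin n) (Fin n) ℝ) (ρ t : ℝ) (z : ℂ)
variable (hA0 : ∀ i j, 0 ≤ A i j) (hdiag : ∀ i, A i i = 0) (hherm : A.IsHermitian)
variable (hray : ∀ x : Fin n → ℝ, x ⬝ᵥ A *ᵥ x ≤ ρ * (x ⬝ᵥ x)) (ht : ρ < t)
variable (hzt : ‖z‖ = t)

include hherm hray ht in
lemma chain_lemma (m : ℕ)
    (hmain : ∀ T (u : Fin n), u ∈ T → T.card ≤ m →
      Gd A T t * ‖Fz A (T.erase u) z‖ ≤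
        Gd A (T.erase u) t * ‖Fz A T z‖) :
    ∀ (K T : Finset (Fin n)), K ⊆ T → T.card ≤ m →
      ‖Fz A (T \ K) z‖ * Gd A T t ≤
        Gd A (T \ K) t * ‖Fz A T z‖ := by
  classical
  intro K
  induction K using Finset.induction_on with
  | empty =>
    intro T _ _
    rw [Finset.sdiff_empty, mul_comm]
  | @insert u K' hu IH =>
    intro T hKT hTm
    have huT : u ∈ T := hKT (mem_insert_self u K')
    have hset : T \ insert u K' = (T.erase u) \ K' := by
      ext i
      simp only [mem_sdiff, mem_insert, Finset.mem_erase]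
      tauto
    have hK'sub : K' ⊆ T.erase u := by
      intro i hi
      rw [Finset.mem_erase]
      exact ⟨ne_of_mem_of_not_mem hi hu, hKT (mem_insert_of_mem hi)⟩
    have hcard : (T.erase u).card ≤ m :=
      le_trans (Finset.card_le_card (Finset.erase_subset u T)) hTm
    have h1 := IH (T.erase u) hK'sub hcard
    rw [← hset] at h1
    have h2 := hmain T u huT hTm
    have hGe := Gd_pos A hherm ρ t hray ht (T.erase u)
    have hGT := Gd_pos A hherm ρ t hray ht T
    have hGTK := Gd_pos A hherm ρ t hray ht (T \ insert u K')
    refine le_of_mul_le_mul_right ?_ hGe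
    calc ‖Fz A (T \ insert u K') z‖ * Gd A T t * Gd A (T.erase u) t
        = (‖Fz A (T \ insert u K') z‖ * Gd A (T.erase u) t) * Gd A T t := by ring
      _ ≤ (Gd A (T \ insert u K') t * ‖Fz A (T.erase u) z‖) * Gd A T t :=
          mul_le_mul_of_nonneg_right h1 (le_of_lt hGT)
      _ = Gd A (T \ insert u K') t * (Gd A T t * ‖Fz A (T.erase u) z‖) := by ring
      _ ≤ Gd A (T \ insert u K') t * (Gd A (T.erase u) t * ‖Fz A T z‖) :=
          mul_le_mul_of_nonneg_left h2 (le_of_lt hGTK)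
      _ = Gd A (T \ insert u K') t * ‖Fz A T z‖ * Gd A (T.erase u) t := by ring

include hA0 hdiag hherm hray ht hzt in
lemma main_all (m : ℕ) :
    ∀ (S : Finset (Fin n)), S.card ≤ m → ∀ v ∈ S,
      Gd A S t * ‖Fz A (S.erase v) z‖ ≤
        Gd A (S.erase v) t * ‖Fz A S z‖ := by
  classical
  induction m with
  | zero =>
    intro S hS v hv
    have h : S = ∅ := Finset.card_eq_zero.mp (Nat.le_zero.mp hS)
    subst h
    exact absurd hv (notMem_empty v)
  | succ m IH =>
    intro S hS v hv
    set C : Finset (Perm (Fin n)) :=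
      univ.filter (fun c : Perm (Fin n) => c.IsCycle ∧ c v ≠ v) with hCdef
    have hC : ∀ c, c ∈ C ↔ c.IsCycle ∧ c v ≠ v := by
      intro c; simp [hCdef]
    have hcard : (S.erase v).card ≤ m := by
      have h1 : (S.erase v).card = S.card - 1 := Finset.card_erase_of_mem hv
      have h2 : 1 ≤ S.card := Finset.card_pos.mpr ⟨v, hv⟩
      omega
    have chain := chain_lemma A ρ t z hherm hray ht m (fun T u hu hT => IH T hT u hu)
    have hFlow := Fz_abs_lower A hA0 hdiag t z hzt S v hv C hC
    have hGrec := Gd_rec A hdiag S v hv t C hC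
    have hGe := Gd_pos A hherm ρ t hray ht (S.erase v)
    have hterm : ∀ c ∈ C,
        wR A S c * (Gd A (S.erase v) t * ‖Fz A (S \ c.support) z‖) ≤
        wR A S c * (Gd A (S \ c.support) t * ‖Fz A (S.erase v) z‖) := by
      intro c hc
      by_cases hsub : c.support ⊆ S
      · have hvs : v ∈ c.support := mem_support.mpr ((hC c).mp hc).2
        have hset : (S.erase v) \ (c.support.erase v) = S \ c.support := by
          ext i
          simp only [mem_sdiff, Finset.mem_erase]
          constructor
          · rintro ⟨⟨hiv, hiS⟩, hni⟩
            exact ⟨hiS, fun hsupp => hni ⟨hiv, hsupp⟩⟩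
          · rintro ⟨hiS, hns⟩
            have hiv : i ≠ v := fun h => hns (h ▸ hvs)
            exact ⟨⟨hiv, hiS⟩, fun hx => hns hx.2⟩
        have hsub' : c.support.erase v ⊆ S.erase v :=
          Finset.erase_subset_erase v hsub
        have hch := chain (c.support.erase v) (S.erase v) hsub' hcard
        rw [hset] at hch
        refine mul_le_mul_of_nonneg_left ?_ (wR_nonneg A hA0 S c)
        calc Gd A (S.erase v) t * ‖Fz A (S \ c.support) z‖
            = ‖Fz A (S \ c.support) z‖ * Gd A (S.erase v) t := by ring
          _ ≤ Gd A (S \ c.support) t * ‖Fz A (S.erase v) z‖ := hch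
      · rw [wR_zero_of_not_sub A S c hsub]
        simp
    have hsum : ∑ c ∈ C, wR A S c * (Gd A (S.erase v) t * ‖Fz A (S \ c.support) z‖)
        ≤ ∑ c ∈ C, wR A S c * (Gd A (S \ c.support) t * ‖Fz A (S.erase v) z‖) :=
      Finset.sum_le_sum hterm
    have h3 : Gd A (S.erase v) t *
        (t * ‖Fz A (S.erase v) z‖
          - ∑ c ∈ C, wR A S c * ‖Fz A (S \ c.support) z‖)
        ≤ Gd A (S.erase v) t * ‖Fz A S z‖ :=
      mul_le_mul_of_nonneg_left hFlow (le_of_lt hGe)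
    have e1 : Gd A S t * ‖Fz A (S.erase v) z‖
        = t * Gd A (S.erase v) t * ‖Fz A (S.erase v) z‖
          - ∑ c ∈ C, wR A S c * (Gd A (S \ c.support) t * ‖Fz A (S.erase v) z‖) := by
      rw [hGrec, sub_mul, Finset.sum_mul]
      congr 1
      refine Finset.sum_congr rfl fun c _ => by ring
    have e2 : Gd A (S.erase v) t *
        (t * ‖Fz A (S.erase v) z‖
          - ∑ c ∈ C, wR A S c * ‖Fz A (S \ c.support) z‖)
        = t * Gd A (S.erase v) t * ‖Fz A (S.erase v) z‖
          - ∑ c ∈ C, wR A S c * (Gd A (S.erase v) t * ‖Fz A (S \ c.support) z‖) := by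
      rw [mul_sub, Finset.mul_sum]
      congr 1
      · ring
      · refine Finset.sum_congr rfl fun c _ => by ring
    linarith [hsum, h3, e1, e2]

include hA0 hdiag hherm hray ht hzt in
lemma disk_bound : Gd A univ t ≤ ‖Fz A univ z‖ := by
  classical
  have hmain := main_all A ρ t z hA0 hdiag hherm hray ht hzt (univ : Finset (Fin n)).card
  have hch := chain_lemma A ρ t z hherm hray ht (univ : Finset (Fin n)).card
    (fun T u hu hT => hmain T hT u hu) univ univ (subset_refl _) (le_refl _)
  rw [Finset.sdiff_self] at hch
  rw [Fz_empty, Gd_empty] at hch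
  simpa using hch

end Main

/-! ### polynomial glue -/

lemma permPoly_eval {R : Type*} [CommRing R] (A : Matrix (Fin n) (Fin n) R) (μ : R) :
    (permPoly A).eval μ =
      (Matrix.of (fun i j => (if i = j then μ else 0) - A i j) :
        Matrix (Fin n) (Fin n) R).permanent := by
  rw [permPoly, Matrix.permanent, Matrix.permanent]
  rw [show (Polynomial.eval μ : R[X] → R) = ⇑(Polynomial.evalRingHom μ) from rfl]
  rw [map_sum]
  refine Finset.sum_congr rfl fun σ _ => ?_
  rw [map_prod]
  refine Finset.prod_congr rfl fun i _ => ?_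
  simp only [Matrix.sub_apply, Matrix.smul_apply, Matrix.one_apply, Matrix.map_apply,
    Matrix.of_apply, coe_evalRingHom, eval_sub, eval_C, smul_eq_mul, eval_mul, eval_X]
  by_cases h : σ i = i <;> simp [h]

lemma permPoly_natDegree_le {R : Type*} [CommRing R] [Nontrivial R]
    (A : Matrix (Fin n) (Fin n) R) : (permPoly A).natDegree ≤ n := by
  rw [permPoly, Matrix.permanent]
  refine Polynomial.natDegree_sum_le_of_forall_le _ _ fun σ _ => ?_
  refine le_trans (Polynomial.natDegree_prod_le _ _) ?_
  have hentry : ∀ i : Fin n,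
      (((Polynomial.X : R[X]) • (1 : Matrix (Fin n) (Fin n) R[X]) - A.map Polynomial.C)
        (σ i) i).natDegree ≤ 1 := by
    intro i
    simp only [Matrix.sub_apply, Matrix.smul_apply, Matrix.one_apply, Matrix.map_apply,
      smul_eq_mul]
    refine le_trans (Polynomial.natDegree_sub_le _ _) ?_
    simp only [Polynomial.natDegree_C, max_le_iff]
    constructor
    · by_cases h : σ i = i <;> simp [h, Polynomial.natDegree_X_le]
    · omega
  calc ∑ i, (((Polynomial.X : R[X]) • (1 : Matrix (Fin n) (Fin n) R[X]) - A.map Polynomial.C)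
        (σ i) i).natDegree ≤ ∑ _i : Fin n, 1 := Finset.sum_le_sum fun i _ => hentry i
    _ = n := by simp

lemma graphPermPoly_eval (G : SimpleGraph (Fin n)) [DecidableRel G.Adj] (μ : ℂ) :
    (graphPermPoly G).eval μ = Fz (G.adjMatrix ℝ) Finset.univ μ := by
  rw [graphPermPoly]
  rw [permPoly_eval]
  rw [Fz]
  congr 1
  ext i j
  have hinst : (Classical.decRel G.Adj) = ‹DecidableRel G.Adj› := Subsingleton.elim _ _
  by_cases h : G.Adj i j <;>
    simp [Mmat, Matrix.of_apply, SimpleGraph.adjMatrix, hinst, h]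

end PerProof

/-- **Upper bound via the spectral radius.** For every simple graph `G` on `n` vertices,
`E_per(G) ≤ n·ρ(G)`. -/
theorem perEnergy_le_card_mul_spectralRadius {n : ℕ} (G : SimpleGraph (Fin n))
    [DecidableRel G.Adj] :
    perEnergy G ≤ (n : ℝ) * specRadius (G.adjMatrix ℝ) := by
  classical
  by_cases hn : n = 0
  · subst hn
    have h1 : graphPermPoly G = 1 := by
      rw [graphPermPoly, permPoly]
      exact Matrix.permanent_isEmpty
    rw [perEnergy, h1]
    simp
  have hnpos : 0 < n := Nat.pos_of_ne_zero hn
  set Ar : Matrix (Fin n) (Fin n) ℝ := G.adjMatrix ℝ with hAr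
  have hherm : Ar.IsHermitian := by
    rw [Matrix.IsHermitian, Matrix.conjTranspose_eq_transpose_of_trivial,
      SimpleGraph.transpose_adjMatrix]
  have hA0 : ∀ i j, 0 ≤ Ar i j := by
    intro i j
    rw [hAr]
    by_cases h : G.Adj i j <;> simp [h]
  have hdiag : ∀ i, Ar i i = 0 := by
    intro i
    simp [hAr]
  have hspec : specRadius Ar = sSup (PerProof.specSet Ar) := rfl
  set ρ : ℝ := specRadius Ar with hρdef
  have hρ0 : 0 ≤ ρ := PerProof.specRadius_nonneg' Ar hnpos
  have hray : ∀ x : Fin n → ℝ, x ⬝ᵥ Ar *ᵥ x ≤ ρ * (x ⬝ᵥ x) := by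
    exact PerProof.rayleigh_bound Ar hherm ρ fun j =>
      PerProof.eigen_le_specRadius Ar hherm j
  -- every root of the permanental polynomial has modulus at most ρ
  have key : ∀ μ ∈ (graphPermPoly G).roots, ‖μ‖ ≤ ρ := by
    intro μ hμ
    by_contra hgt
    push_neg at hgt
    have hzero : (graphPermPoly G).eval μ = 0 := (Polynomial.mem_roots'.mp hμ).2
    rw [PerProof.graphPermPoly_eval G μ] at hzero
    have hdisk := PerProof.disk_bound Ar ρ (‖μ‖) μ hA0 hdiag hherm hray hgt rfl
    have hGpos := PerProof.Gd_pos Ar hherm ρ (‖μ‖) hray hgt Finset.univ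
    rw [hzero] at hdisk
    simp at hdisk
    linarith
  -- assemble
  have hcard : (graphPermPoly G).roots.card ≤ n := by
    refine le_trans (Polynomial.card_roots' _) ?_
    rw [graphPermPoly]
    exact PerProof.permPoly_natDegree_le _
  rw [perEnergy]
  have hsum : ((graphPermPoly G).roots.map (fun z : ℂ => ‖z‖)).sum
      ≤ ((graphPermPoly G).roots.map (fun z : ℂ => ‖z‖)).card • ρ := by
    refine Multiset.sum_le_card_nsmul _ _ ?_
    intro x hx
    obtain ⟨μ, hμ, rfl⟩ := Multiset.mem_map.mp hx
    exact key μ hμ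
  rw [Multiset.card_map] at hsum
  refine le_trans hsum ?_
  rw [nsmul_eq_mul]
  exact mul_le_mul_of_nonneg_right (by exact_mod_cast hcard) hρ0
end

section
/- Let G be a finite simple bipartite graph on n vertices that contains no cycle of length 4k for any integer k ≥ 1. Then π(G,x) = i^{−n} · χ(G, i·x) as polynomials over ℂ, where i is the imaginary unit; equivalently, the multiset of roots of π(G,x) equals {−i·λ_1, …, −i·λ_n}, where λ_1, …, λ_n are the adjacency eigenvalues of G (with multiplicity). -/
open Polynomial Matrix

section Aux

open SimpleGraph

variable {n : ℕ}

private def permWalk (G : SimpleGraph (Fin n)) (σ : Equiv.Perm (Fin n)) (a : Fin n)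
    (h : ∀ k : ℕ, G.Adj ((σ ^ (k + 1)) a) ((σ ^ k) a)) : (k : ℕ) → G.Walk ((σ ^ k) a) a
  | 0 => Walk.nil.copy (by simp) rfl
  | (k + 1) => Walk.cons (h k) (permWalk G σ a h k)

private lemma length_permWalk (G : SimpleGraph (Fin n)) (σ : Equiv.Perm (Fin n)) (a : Fin n)
    (h : ∀ k : ℕ, G.Adj ((σ ^ (k + 1)) a) ((σ ^ k) a)) (k : ℕ) :
    (permWalk G σ a h k).length = k := by
  induction k with
  | zero => simp [permWalk]
  | succ k ih => simp [permWalk, ih]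

private lemma support_permWalk (G : SimpleGraph (Fin n)) (σ : Equiv.Perm (Fin n)) (a : Fin n)
    (h : ∀ k : ℕ, G.Adj ((σ ^ (k + 1)) a) ((σ ^ k) a)) (k : ℕ) :
    (permWalk G σ a h k).support = ((List.range (k + 1)).map (fun j => (σ ^ j) a)).reverse := by
  induction k with
  | zero => simp [permWalk, List.range_succ]
  | succ k ih => simp [permWalk, ih, List.range_succ]

private lemma edges_permWalk (G : SimpleGraph (Fin n)) (σ : Equiv.Perm (Fin n)) (a : Fin n)
    (h : ∀ k : ℕ, G.Adj ((σ ^ (k + 1)) a) ((σ ^ k) a)) (k : ℕ) :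
    ∀ e ∈ (permWalk G σ a h k).edges, ∃ j, j < k ∧ e = s((σ ^ (j + 1)) a, (σ ^ j) a) := by
  induction k with
  | zero => simp [permWalk]
  | succ k ih =>
    intro e he
    rw [permWalk, SimpleGraph.Walk.edges_cons, List.mem_cons] at he
    rcases he with he | he
    · exact ⟨k, by omega, he⟩
    · obtain ⟨j, hj, hje⟩ := ih e he
      exact ⟨j, by omega, hje⟩

end Aux

section Aux2

variable {n : ℕ}

private lemma cycle_support_card (G : SimpleGraph (Fin n)) [DecidableRel G.Adj]
    (hbip : G.Colorable 2)
    (hcyc : ∀ (v : Fin n) (w : G.Walk v v), w.IsCycle → ¬ (4 ∣ w.length))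
    (σ : Equiv.Perm (Fin n)) (hc : σ.IsCycle)
    (hcompat : ∀ i, σ i ≠ i → G.Adj (σ i) i) :
    σ.support.card % 4 = 2 := by
  classical
  obtain ⟨a, ha, -⟩ := id hc
  set m := σ.support.card with hm
  have hm2 : 2 ≤ m := hc.two_le_card_support
  have horder : orderOf σ = m := hc.orderOf
  have hmem : ∀ k : ℕ, (σ ^ k) a ∈ σ.support :=
    fun k => Equiv.Perm.pow_apply_mem_support.mpr (Equiv.Perm.mem_support.mpr ha)
  have hadj : ∀ k : ℕ, G.Adj ((σ ^ (k + 1)) a) ((σ ^ k) a) := by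
    intro k
    have h1 : (σ ^ (k + 1)) a = σ ((σ ^ k) a) := by
      rw [pow_succ']; rfl
    rw [h1]
    exact hcompat _ (Equiv.Perm.mem_support.mp (hmem k))
  have hma : (σ ^ m) a = a := by rw [← horder, pow_orderOf_eq_one]; rfl
  have hinj : ∀ j k, j < m → k < m → (σ ^ j) a = (σ ^ k) a → j = k := by
    have key : ∀ j k, j < k → k < m → (σ ^ j) a ≠ (σ ^ k) a := by
      intro j k hjk hkm heq
      have h1 : (σ ^ (k - j)) ((σ ^ j) a) = (σ ^ j) a := by
        rw [← Equiv.Perm.mul_apply, ← pow_add, Nat.sub_add_cancel hjk.le, ← heq]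
      have hfix : σ ((σ ^ j) a) ≠ (σ ^ j) a := Equiv.Perm.mem_support.mp (hmem j)
      have h2 : σ ^ (k - j) = 1 := (hc.pow_eq_one_iff' hfix).mpr h1
      have h3 := orderOf_dvd_of_pow_eq_one h2
      rw [horder] at h3
      have := Nat.le_of_dvd (by omega) h3
      omega
    intro j k hj hk heq
    rcases lt_trichotomy j k with h | h | h
    · exact absurd heq (key j k h hk)
    · exact h
    · exact absurd heq.symm (key k j h hj)
  have heven : 2 ∣ m := by
    obtain ⟨C⟩ := hbip
    have hstep : ∀ x y : Fin 2, x ≠ y → ((x : ℕ) : ZMod 2) = (y : ℕ) + 1 := by decide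
    have hall : ∀ k : ℕ, ((C ((σ ^ k) a) : ℕ) : ZMod 2) = (C a : ℕ) + k := by
      intro k
      induction k with
      | zero => simp
      | succ k ih =>
        have hne : C ((σ ^ (k + 1)) a) ≠ C ((σ ^ k) a) := C.valid (hadj k)
        rw [hstep _ _ hne, ih]
        push_cast
        ring
    have h1 := hall m
    rw [hma, left_eq_add] at h1
    have h0 : ((m : ℕ) : ZMod 2) = 0 := by exact_mod_cast h1
    exact (ZMod.natCast_eq_zero_iff m 2).mp h0
  have h4 : ¬ (4 ∣ m) := by
    intro h4
    have hm4 : 4 ≤ m := Nat.le_of_dvd (by omega) h4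
    set p := permWalk G σ a hadj (m - 1) with hp
    have hadj' : G.Adj a ((σ ^ (m - 1)) a) := by
      have h5 := hadj (m - 1)
      rw [show m - 1 + 1 = m by omega, hma] at h5
      exact h5
    set w := SimpleGraph.Walk.cons hadj' p with hw
    have hlen : w.length = m := by
      rw [hw, SimpleGraph.Walk.length_cons, hp, length_permWalk]
      omega
    have hcyc' : w.IsCycle := by
      rw [hw, SimpleGraph.Walk.cons_isCycle_iff]
      constructor
      · rw [SimpleGraph.Walk.isPath_def, hp, support_permWalk, List.nodup_reverse]
        apply List.Nodup.map_on ?_ List.nodup_range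
        intro j hj k hk hjk
        rw [List.mem_range] at hj hk
        exact hinj j k (by omega) (by omega) hjk
      · intro hmem'
        obtain ⟨j, hj, hje⟩ := edges_permWalk G σ a hadj (m - 1) _ hmem'
        rw [Sym2.eq_iff] at hje
        rcases hje with ⟨h1, h2⟩ | ⟨h1, h2⟩
        · have : (0 : ℕ) = j + 1 := hinj 0 (j + 1) (by omega) (by omega) (by simpa using h1)
          omega
        · have e1 : (0 : ℕ) = j := hinj 0 j (by omega) (by omega) (by simpa using h1)
          have e2 : m - 1 = j + 1 := hinj (m - 1) (j + 1) (by omega) (by omega) h2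
          omega
    exact hcyc a w hcyc' (hlen ▸ h4)
  omega

end Aux2

private lemma sign_eq_I_pow {n : ℕ} (G : SimpleGraph (Fin n)) [DecidableRel G.Adj]
    (hbip : G.Colorable 2)
    (hcyc : ∀ (v : Fin n) (w : G.Walk v v), w.IsCycle → ¬ (4 ∣ w.length))
    (σ : Equiv.Perm (Fin n)) :
    (∀ i, σ i ≠ i → G.Adj (σ i) i) →
      ((Equiv.Perm.sign σ : ℤ) : ℂ) = Complex.I ^ σ.support.card := by
  induction σ using Equiv.Perm.cycle_induction_on with
  | base_one => intro _; simp
  | base_cycles σ hσ =>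
    intro hcompat
    have hmod := cycle_support_card G hbip hcyc σ hσ hcompat
    obtain ⟨q, hq⟩ : ∃ q, σ.support.card = 4 * q + 2 := ⟨σ.support.card / 4, by omega⟩
    have h1 : Complex.I ^ σ.support.card = -1 := by
      rw [hq, pow_add, pow_mul, Complex.I_pow_four, one_pow, one_mul, Complex.I_sq]
    have h2 : Equiv.Perm.sign σ = -1 := by
      rw [hσ.sign, Even.neg_one_pow ⟨2 * q + 1, by omega⟩]
    rw [h1, h2]
    simp
  | induction_disjoint σ τ hd hc ih1 ih2 =>
    intro hcompat
    have hcσ : ∀ i, σ i ≠ i → G.Adj (σ i) i := by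
      intro i hi
      have hτ : τ i = i := (hd i).resolve_left hi
      have h1 : (σ * τ) i = σ i := by rw [Equiv.Perm.mul_apply, hτ]
      have := hcompat i (by rw [h1]; exact hi)
      rwa [h1] at this
    have hcτ : ∀ i, τ i ≠ i → G.Adj (τ i) i := by
      intro i hi
      have hσf : σ (τ i) = τ i := by
        rcases hd (τ i) with h | h
        · exact h
        · exact absurd (τ.injective h) hi
      have h1 : (σ * τ) i = τ i := by rw [Equiv.Perm.mul_apply, hσf]
      have := hcompat i (by rw [h1]; exact hi)
      rwa [h1] at this
    rw [Equiv.Perm.sign_mul, hd.card_support_mul, pow_add]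
    push_cast
    rw [ih1 hcσ, ih2 hcτ]

/-- **Borowiecki.** If `G` is bipartite and contains no cycle of length `4k` for any
`k ≥ 1`, then `π(G,x) = i^{−n}·χ(G, i·x)` as polynomials over `ℂ`. -/
theorem permPoly_eq_I_zpow_smul_charpoly_comp {n : ℕ} (G : SimpleGraph (Fin n))
    [DecidableRel G.Adj] (hbip : G.Colorable 2)
    (hcyc : ∀ (v : Fin n) (w : G.Walk v v), w.IsCycle → ¬ (4 ∣ w.length)) :
    permPoly (G.adjMatrix ℂ) =
      Complex.I ^ (-(n : ℤ)) •
        ((G.adjMatrix ℂ).charpoly.comp (Polynomial.C Complex.I * Polynomial.X)) := by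
  classical
  apply Polynomial.funext
  intro x
  set A := G.adjMatrix ℂ with hA
  have hL : (permPoly A).eval x
      = ∑ σ : Equiv.Perm (Fin n), ∏ i, ((if σ i = i then x else 0) - A (σ i) i) := by
    rw [permPoly, Matrix.permanent, Polynomial.eval_finset_sum]
    refine Finset.sum_congr rfl fun σ _ => ?_
    rw [Polynomial.eval_prod]
    refine Finset.prod_congr rfl fun i _ => ?_
    simp [Matrix.sub_apply, Matrix.smul_apply, Matrix.one_apply, Matrix.map_apply,
      smul_eq_mul, mul_ite, mul_one, mul_zero, apply_ite (Polynomial.eval x)]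
  have hR : ∀ t : ℂ, (A.charpoly).eval t
      = ∑ σ : Equiv.Perm (Fin n),
          ((Equiv.Perm.sign σ : ℤ) : ℂ) * ∏ i, ((if σ i = i then t else 0) - A (σ i) i) := by
    intro t
    rw [Matrix.charpoly, show (Polynomial.eval t : ℂ[X] → ℂ) = (Polynomial.evalRingHom t : ℂ[X] → ℂ) from rfl]
    rw [RingHom.map_det, Matrix.det_apply]
    refine Finset.sum_congr rfl fun σ _ => ?_
    rw [Units.smul_def, zsmul_eq_mul]
    congr 1
    refine Finset.prod_congr rfl fun i _ => ?_
    by_cases h : σ i = i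
    · simp [h, RingHom.mapMatrix_apply, Matrix.map_apply, Matrix.charmatrix_apply_eq]
    · simp [h, RingHom.mapMatrix_apply, Matrix.map_apply, Matrix.charmatrix_apply_ne _ _ _ h]
  have hkey : ∀ σ : Equiv.Perm (Fin n),
      ((Equiv.Perm.sign σ : ℤ) : ℂ) *
          ∏ i, ((if σ i = i then Complex.I * x else 0) - A (σ i) i)
        = Complex.I ^ n * ∏ i, ((if σ i = i then x else 0) - A (σ i) i) := by
    intro σ
    by_cases hcompat : ∀ i, σ i ≠ i → G.Adj (σ i) i
    · have hfac : ∀ i : Fin n, ((if σ i = i then Complex.I * x else 0) - A (σ i) i)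
          = (if σ i = i then Complex.I else 1) * ((if σ i = i then x else 0) - A (σ i) i) := by
        intro i
        by_cases h : σ i = i
        · simp [h, hA, SimpleGraph.adjMatrix_apply]
        · simp [h]
      rw [Finset.prod_congr rfl (fun i _ => hfac i), Finset.prod_mul_distrib]
      have hpr : (∏ i : Fin n, (if σ i = i then Complex.I else (1 : ℂ)))
          = Complex.I ^ (Finset.univ.filter (fun i => σ i = i)).card := by
        rw [Finset.prod_ite, Finset.prod_const, Finset.prod_const, one_pow, mul_one]
      have hcard : (Finset.univ.filter (fun i => σ i = i)).card + σ.support.card = n := by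
        have h1 := Finset.card_filter_add_card_filter_not
          (s := (Finset.univ : Finset (Fin n))) (p := fun i : Fin n => σ i = i)
        simpa [Equiv.Perm.support] using h1
      rw [hpr, sign_eq_I_pow G hbip hcyc σ hcompat, ← mul_assoc, ← pow_add]
      congr 2
      omega
    · push_neg at hcompat
      obtain ⟨i0, hne, hnadj⟩ := hcompat
      have h0 : A (σ i0) i0 = 0 := by simp [hA, SimpleGraph.adjMatrix_apply, hnadj]
      have hz1 : ((if σ i0 = i0 then Complex.I * x else 0) - A (σ i0) i0) = 0 := by
        simp [hne, h0]
      have hz2 : ((if σ i0 = i0 then x else 0) - A (σ i0) i0) = 0 := by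
        simp [hne, h0]
      rw [Finset.prod_eq_zero (Finset.mem_univ i0) hz1,
        Finset.prod_eq_zero (Finset.mem_univ i0) hz2, mul_zero, mul_zero]
  rw [Polynomial.eval_smul, Polynomial.eval_comp, Polynomial.eval_mul, Polynomial.eval_C,
    Polynomial.eval_X, hL, hR]
  have hIn : (Complex.I : ℂ) ^ n ≠ 0 := pow_ne_zero _ Complex.I_ne_zero
  have hz : Complex.I ^ (-(n : ℤ)) = (Complex.I ^ n)⁻¹ := by
    rw [_root_.zpow_neg, zpow_natCast]
  rw [hz, smul_eq_mul]
  have hs : (∑ σ : Equiv.Perm (Fin n),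
      ((Equiv.Perm.sign σ : ℤ) : ℂ) * ∏ i, ((if σ i = i then Complex.I * x else 0) - A (σ i) i))
      = Complex.I ^ n * ∑ σ : Equiv.Perm (Fin n), ∏ i, ((if σ i = i then x else 0) - A (σ i) i) := by
    rw [Finset.mul_sum]
    exact Finset.sum_congr rfl fun σ _ => hkey σ
  rw [hs, inv_mul_cancel_left₀ hIn]
end

section
/- Let G be a finite simple graph on n vertices with m edges and adjacency matrix A(G). Suppose there exists a real n×n skew-symmetric matrix S (i.e., Sᵀ = −S) such that |S_{uv}| = A(G)_{uv} for all vertices u, v, and such that per(x·I − A(G)) = det(x·I − S) as polynomials. Then E_per(G) ≤ √(2mn). -/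
open Polynomial Matrix

lemma aux_charpoly_conj {n : ℕ} (U A : Matrix (Fin n) (Fin n) ℂ)
    (hU : U * Uᴴ = 1) (hU' : Uᴴ * U = 1) :
    (U * A * Uᴴ).charpoly = A.charpoly := by
  unfold Matrix.charpoly
  have hone : (1 : Matrix (Fin n) (Fin n) ℂ).map C = 1 :=
    Matrix.map_one _ (map_zero C) (map_one C)
  have hdiag : Matrix.diagonal (fun _ : Fin n => (X : ℂ[X])) =
      (X : ℂ[X]) • (1 : Matrix (Fin n) (Fin n) ℂ[X]) := by
    ext i j
    rcases eq_or_ne i j with h | h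
    · simp [h, Matrix.one_apply]
    · simp [Matrix.diagonal_apply_ne _ h, Matrix.one_apply_ne h]
  have hcm : charmatrix (U * A * Uᴴ) =
      U.map C * charmatrix A * Uᴴ.map C := by
    unfold charmatrix
    simp only [RingHom.mapMatrix_apply, mul_sub, sub_mul]
    congr 1
    · rw [scalar_apply, hdiag, mul_smul_comm, smul_mul_assoc, mul_one,
        ← Matrix.map_mul, hU, hone]
    · rw [← Matrix.map_mul, ← Matrix.map_mul]
  rw [hcm, Matrix.det_mul, Matrix.det_mul, mul_comm, ← mul_assoc, ← Matrix.det_mul,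
    ← Matrix.map_mul, hU', hone, Matrix.det_one, one_mul]

lemma aux_charpoly_diagonal {n : ℕ} (d : Fin n → ℂ) :
    (Matrix.diagonal d).charpoly = ∏ i, (X - C (d i)) := by
  unfold Matrix.charpoly charmatrix
  rw [scalar_apply, RingHom.mapMatrix_apply, Matrix.diagonal_map (map_zero C),
    Matrix.diagonal_sub, Matrix.det_diagonal]

/-- **McClelland-type bound.** If there is a real skew-symmetric matrix `S` with
`|S_{uv}| = A(G)_{uv}` for all `u, v` and `per(x·I − A(G)) = det(x·I − S)`,
then `E_per(G) ≤ √(2mn)`. -/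
theorem perEnergy_le_sqrt_of_skew_model {n : ℕ} (G : SimpleGraph (Fin n))
    [DecidableRel G.Adj] (S : Matrix (Fin n) (Fin n) ℝ)
    (hskew : Sᵀ = -S)
    (habs : ∀ u v, |S u v| = G.adjMatrix ℝ u v)
    (hper : permPoly (G.adjMatrix ℂ) = (S.map Complex.ofReal).charpoly) :
    perEnergy G ≤ Real.sqrt (2 * (G.edgeFinset.card : ℝ) * (n : ℝ)) := by
  classical
  set M : Matrix (Fin n) (Fin n) ℂ := S.map Complex.ofReal with hM
  have hMskew : Mᴴ = -M := by
    ext i j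
    simp only [conjTranspose_apply, hM, Matrix.map_apply, Matrix.neg_apply]
    rw [← Matrix.transpose_apply S j i, hskew]
    simp
  set H : Matrix (Fin n) (Fin n) ℂ := Complex.I • M with hHdef
  have hH : H.IsHermitian := by
    unfold Matrix.IsHermitian
    rw [hHdef, conjTranspose_smul, hMskew]
    simp [Complex.conj_I]
  set U : Matrix (Fin n) (Fin n) ℂ := (hH.eigenvectorUnitary : Matrix (Fin n) (Fin n) ℂ) with hUdef
  set lam : Fin n → ℝ := hH.eigenvalues with hlam
  set D : Matrix (Fin n) (Fin n) ℂ := Matrix.diagonal (fun i => (lam i : ℂ)) with hDdef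
  have hUU : U * Uᴴ = 1 := by
    have := Unitary.coe_mul_star_self hH.eigenvectorUnitary
    rwa [Unitary.coe_star, Matrix.star_eq_conjTranspose] at this
  have hUU' : Uᴴ * U = 1 := by
    have := Unitary.coe_star_mul_self hH.eigenvectorUnitary
    rwa [Matrix.star_eq_conjTranspose] at this
  have hspec : H = U * D * Uᴴ := by
    have := hH.spectral_theorem
    rw [Unitary.conjStarAlgAut_apply, Matrix.star_eq_conjTranspose] at this
    simpa [hUdef, hlam, hDdef, Function.comp_def] using this
  have hMspec : M = U * Matrix.diagonal (fun i => -Complex.I * (lam i : ℂ)) * Uᴴ := by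
    have h1 : M = (-Complex.I) • H := by
      rw [hHdef, smul_smul]; simp
    have hd : (fun i => -Complex.I * (lam i : ℂ)) = (-Complex.I) • (fun i => (lam i : ℂ)) := by
      funext i; simp
    rw [h1, hspec, ← smul_mul_assoc, ← mul_smul_comm, hDdef, hd, Matrix.diagonal_smul]
  have hcp : M.charpoly = ∏ i, (X - C (-Complex.I * (lam i : ℂ))) := by
    rw [hMspec, aux_charpoly_conj U _ hUU hUU', aux_charpoly_diagonal]
  have hroots : M.charpoly.roots =
      (Finset.univ.val.map (fun i => -Complex.I * (lam i : ℂ))) := by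
    rw [hcp]
    have : (∏ i, (X - C (-Complex.I * (lam i : ℂ)))) =
        ((Finset.univ.val.map (fun i => -Complex.I * (lam i : ℂ))).map
          (fun a => X - C a)).prod := by
      rw [Multiset.map_map]; rfl
    rw [this, Polynomial.roots_multiset_prod_X_sub_C]
  have hGP : graphPermPoly G = M.charpoly := by
    rw [graphPermPoly, Subsingleton.elim (Classical.decRel G.Adj) ‹DecidableRel G.Adj›]
    exact hper
  have hE : perEnergy G = ∑ i, |lam i| := by
    rw [perEnergy, hGP, hroots, Multiset.map_map]
    rw [show Finset.univ.sum (fun i => |lam i|) =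
      (Finset.univ.val.map (fun i => |lam i|)).sum from rfl]
    congr 1
    apply Multiset.map_congr rfl
    intro i _
    simp [Complex.norm_def, Complex.normSq_mul, Complex.normSq_ofReal, Real.sqrt_mul_self_eq_abs,
      Function.comp]
  -- trace of H^2 two ways
  have htrH2 : (H * H).trace = ∑ i, ((lam i : ℂ))^2 := by
    have key : (U * D * Uᴴ) * (U * D * Uᴴ) = U * (D * (D * Uᴴ)) := by
      simp only [mul_assoc]
      rw [← mul_assoc Uᴴ U, hUU', one_mul]
    rw [hspec, key, Matrix.trace_mul_comm]
    simp only [mul_assoc]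
    rw [hUU', mul_one, hDdef, Matrix.diagonal_mul_diagonal, Matrix.trace_diagonal]
    simp [sq]
  have hMvu : ∀ u v, M v u = -M u v := by
    intro u v
    simp only [hM, Matrix.map_apply]
    rw [← Matrix.transpose_apply S u v, hskew]
    simp
  have hsq : ∀ u v, (M u v) * (M v u) = -((G.adjMatrix ℝ u v : ℝ) : ℂ) := by
    intro u v
    have h2 : (S u v)^2 = G.adjMatrix ℝ u v := by
      rw [← sq_abs, habs u v]
      by_cases hadj : G.Adj u v <;> simp [hadj]
    rw [hMvu u v]
    have : M u v = ((S u v : ℝ) : ℂ) := by simp [hM, Matrix.map_apply]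
    rw [this, ← h2]
    push_cast
    ring
  have htrM2 : (M * M).trace = -(2 * (G.edgeFinset.card : ℂ)) := by
    have hrow : ∀ u, ∑ v, G.adjMatrix ℝ u v = (G.degree u : ℝ) := by
      intro u
      simp only [SimpleGraph.adjMatrix_apply, SimpleGraph.degree]
      rw [Finset.sum_boole, SimpleGraph.neighborFinset_eq_filter]
    have hsum : ∑ u, ∑ v, G.adjMatrix ℝ u v = 2 * (G.edgeFinset.card : ℝ) := by
      simp only [hrow]
      rw [← Nat.cast_sum]
      rw [SimpleGraph.sum_degrees_eq_twice_card_edges]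
      push_cast; ring
    have : (M * M).trace = ∑ u, ∑ v, M u v * M v u := by
      simp [Matrix.trace, Matrix.mul_apply, Matrix.diag]
    rw [this]
    simp only [hsq]
    calc (∑ u : Fin n, ∑ v : Fin n, -((G.adjMatrix ℝ u v : ℝ) : ℂ))
        = -(((∑ u : Fin n, ∑ v : Fin n, G.adjMatrix ℝ u v : ℝ)) : ℂ) := by
          push_cast
          simp [Finset.sum_neg_distrib]
      _ = -(2 * (G.edgeFinset.card : ℂ)) := by rw [hsum]; push_cast; ring
  have hsumsq : ∑ i, (lam i)^2 = 2 * (G.edgeFinset.card : ℝ) := by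
    have hHH : H * H = -(M * M) := by
      rw [hHdef, smul_mul_assoc, mul_smul_comm, smul_smul, Complex.I_mul_I, neg_one_smul]
    have : (∑ i, ((lam i : ℂ))^2) = 2 * (G.edgeFinset.card : ℂ) := by
      rw [← htrH2, hHH, Matrix.trace_neg, htrM2, neg_neg]
    have h2 : ((∑ i, (lam i)^2 : ℝ) : ℂ) = ((2 * (G.edgeFinset.card : ℝ) : ℝ) : ℂ) := by
      push_cast
      exact this
    exact_mod_cast h2
  -- Cauchy-Schwarz and finish
  rw [hE]
  apply Real.le_sqrt_of_sq_le
  calc (∑ i, |lam i|)^2 ≤ ((Finset.univ : Finset (Fin n)).card : ℝ) * ∑ i, |lam i|^2 :=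
        sq_sum_le_card_mul_sum_sq
    _ = (n : ℝ) * ∑ i, (lam i)^2 := by simp [sq_abs]
    _ = 2 * (G.edgeFinset.card : ℝ) * (n : ℝ) := by rw [hsumsq]; ring
end
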